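/- arXiv:1105.0585 — 4 statements merged into one kernel-verified Lean document; each statement's English description precedes it below -/
import Mathlib

section
/- For every real ν with ν > −1 and every real u with 0 < u < 1/(1−q), the first q-Bessel function satisfies ∂^q_u ( u^{−ν} J^{(1)}_ν(u|q²) ) = − u · u^{−(ν+1)} J^{(1)}_{ν+1}(u|q²). -/
open scoped BigOperators

noncomputable section

/-- The q-number `[u]_q = (q^u - 1)/(q - 1)`. -/
def qNum (q u : ℝ) : ℝ := (q ^ u - 1) / (q - 1)

/-- The q-factorial `[n]_q! = ∏_{i=1}^n [i]_q`. -/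
def qFact (q : ℝ) (n : ℕ) : ℝ := ∏ i ∈ Finset.range n, qNum q ((i : ℝ) + 1)

/-- The q-Gamma function `Γ_q(t) = (1-q)^{1-t} ∏_{k=0}^∞ (1-q^{k+1})/(1-q^{k+t})`. -/
def qGamma (q t : ℝ) : ℝ :=
  (1 - q) ^ (1 - t) * ∏' k : ℕ, (1 - q ^ (k + 1)) / (1 - q ^ ((k : ℝ) + t))

open Real

lemma log_one_sub_bound {c x : ℝ} (hx0 : 0 ≤ x) (hxc : x ≤ c) (hc : c < 1) :
    -Real.log (1 - x) ≤ x / (1 - c) := by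
  have h1 : (0:ℝ) < 1 - c := by linarith
  have h2 : (0:ℝ) < 1 - x := by linarith
  have h := Real.log_le_sub_one_of_pos (x := (1-x)⁻¹) (by positivity)
  rw [Real.log_inv] at h
  have h3 : (1-x)⁻¹ - 1 = x / (1-x) := by field_simp; ring
  have h4 : -Real.log (1-x) ≤ x / (1-x) := by rw [← h3]; linarith
  refine h4.trans ?_
  gcongr

lemma summable_log_one_sub {Q c : ℝ} (hQ0 : 0 < Q) (hQ1 : Q < 1) (hc0 : 0 ≤ c) (hc1 : c < 1) :
    Summable fun k : ℕ => Real.log (1 - c * Q ^ k) := by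
  apply Summable.of_norm_bounded (g := fun k => c / (1 - c) * Q ^ k)
  · exact (summable_geometric_of_lt_one hQ0.le hQ1).mul_left _
  · intro k
    have hQk0 : (0:ℝ) < Q ^ k := by positivity
    have hQk : Q ^ k ≤ 1 := pow_le_one₀ hQ0.le hQ1.le
    have hx0 : 0 ≤ c * Q ^ k := by positivity
    have hxc : c * Q ^ k ≤ c := by nlinarith
    have hpos : (0:ℝ) < 1 - c * Q ^ k := by linarith
    have hlogle : Real.log (1 - c * Q ^ k) ≤ 0 :=
      Real.log_nonpos (by linarith) (by linarith)
    rw [Real.norm_eq_abs, abs_of_nonpos hlogle]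
    calc -Real.log (1 - c * Q ^ k) ≤ (c * Q ^ k) / (1 - c) := log_one_sub_bound hx0 hxc hc1
      _ = c / (1 - c) * Q ^ k := by ring

lemma qGamma_ge {Q : ℝ} (hQ0 : 0 < Q) (hQ1 : Q < 1) {t : ℝ} (ht : 0 < t) :
    Real.exp (∑' k : ℕ, Real.log (1 - Q * Q ^ k)) * (1 - Q) ^ (1 - t) ≤ qGamma Q t := by
  have h1Q : (0:ℝ) < 1 - Q := by linarith
  set f : ℕ → ℝ := fun k => (1 - Q ^ (k + 1)) / (1 - Q ^ ((k : ℝ) + t)) with hf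
  have hden : ∀ k : ℕ, 0 < 1 - Q ^ ((k : ℝ) + t) ∧ Q ^ ((k : ℝ) + t) > 0 := by
    intro k
    constructor
    · have : Q ^ ((k : ℝ) + t) < 1 := Real.rpow_lt_one hQ0.le hQ1 (by positivity)
      linarith
    · exact Real.rpow_pos_of_pos hQ0 _
  have hnum : ∀ k : ℕ, 0 < 1 - Q ^ (k + 1) := by
    intro k
    have : Q ^ (k + 1) < 1 := pow_lt_one₀ hQ0.le hQ1 (Nat.succ_ne_zero k)
    linarith
  have hfpos : ∀ k, 0 < f k := fun k => div_pos (hnum k) (hden k).1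
  have hrw : ∀ k : ℕ, (1 : ℝ) - Q ^ ((k:ℝ) + t) = 1 - Q ^ t * Q ^ k := by
    intro k
    rw [Real.rpow_add hQ0, Real.rpow_natCast]
    ring
  have hsumden : Summable fun k : ℕ => Real.log (1 - Q ^ ((k:ℝ) + t)) := by
    simp_rw [hrw]
    exact summable_log_one_sub hQ0 hQ1 (Real.rpow_pos_of_pos hQ0 t).le
      (Real.rpow_lt_one hQ0.le hQ1 ht)
  have hsumnum : Summable fun k : ℕ => Real.log (1 - Q ^ (k + 1)) := by
    have : ∀ k : ℕ, (1:ℝ) - Q ^ (k+1) = 1 - Q * Q ^ k := by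
      intro k; rw [pow_succ']
    simp_rw [this]
    exact summable_log_one_sub hQ0 hQ1 hQ0.le hQ1
  have hlogf : ∀ k, Real.log (f k) =
      Real.log (1 - Q ^ (k + 1)) - Real.log (1 - Q ^ ((k:ℝ) + t)) := by
    intro k
    rw [hf]
    exact Real.log_div (hnum k).ne' (hden k).1.ne'
  have hsumf : Summable fun k => Real.log (f k) := by
    simp_rw [hlogf]
    exact hsumnum.sub hsumden
  have htprod : ∏' k, f k = Real.exp (∑' k, Real.log (f k)) := by
    exact (Real.rexp_tsum_eq_tprod hfpos hsumf).symm
  have hle : (∑' k : ℕ, Real.log (1 - Q * Q ^ k)) ≤ ∑' k, Real.log (f k) := by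
    apply Summable.tsum_le_tsum _ _ hsumf
    · intro k
      have hk : (1:ℝ) - Q * Q ^ k = 1 - Q ^ (k + 1) := by rw [pow_succ']
      rw [hk]
      apply Real.log_le_log (hnum k)
      rw [hf, le_div_iff₀ (hden k).1]
      nlinarith [(hnum k), (hden k).1, (hden k).2]
    · have : ∀ k : ℕ, (1:ℝ) - Q * Q ^ k = 1 - Q ^ (k+1) := by intro k; rw [pow_succ']
      simp_rw [this]
      exact hsumnum
  have hpow : (0:ℝ) < (1 - Q) ^ (1 - t) := Real.rpow_pos_of_pos h1Q _
  rw [qGamma, htprod]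
  calc Real.exp (∑' k : ℕ, Real.log (1 - Q * Q ^ k)) * (1 - Q) ^ (1 - t)
      ≤ Real.exp (∑' k, Real.log (f k)) * (1 - Q) ^ (1 - t) := by
        gcongr
    _ = (1 - Q) ^ (1 - t) * Real.exp (∑' k, Real.log (f k)) := by ring

lemma qGamma_pos {Q : ℝ} (hQ0 : 0 < Q) (hQ1 : Q < 1) {t : ℝ} (ht : 0 < t) :
    0 < qGamma Q t := by
  have h1Q : (0:ℝ) < 1 - Q := by linarith
  refine lt_of_lt_of_le ?_ (qGamma_ge hQ0 hQ1 ht)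
  exact mul_pos (Real.exp_pos _) (Real.rpow_pos_of_pos h1Q _)

lemma qFact_ge {Q : ℝ} (hQ0 : 0 < Q) (hQ1 : Q < 1) (n : ℕ) :
    Real.exp (∑' k : ℕ, Real.log (1 - Q * Q ^ k)) ≤ qFact Q n * (1 - Q) ^ n := by
  have h1Q : (0:ℝ) < 1 - Q := by linarith
  have hnum : ∀ k : ℕ, 0 < 1 - Q * Q ^ k := by
    intro k
    have h1 : Q * Q ^ k ≤ Q * 1 := by
      have := pow_le_one₀ hQ0.le hQ1.le (n := k); nlinarith
    nlinarith
  have h1 : qFact Q n * (1 - Q) ^ n = ∏ k ∈ Finset.range n, (1 - Q * Q ^ k) := by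
    have : ((1:ℝ) - Q) ^ n = ∏ _k ∈ Finset.range n, (1 - Q) := by
      rw [Finset.prod_const, Finset.card_range]
    rw [qFact, this, ← Finset.prod_mul_distrib]
    apply Finset.prod_congr rfl
    intro k _
    have : Q ^ ((k:ℝ) + 1) = Q * Q ^ k := by
      rw [show ((k:ℝ) + 1) = ((k + 1 : ℕ) : ℝ) by push_cast; ring, Real.rpow_natCast, pow_succ']
    rw [qNum, this]
    have hne : Q - 1 ≠ 0 := by linarith
    field_simp
    ring
  have h2 : ∏ k ∈ Finset.range n, (1 - Q * Q ^ k) =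
      Real.exp (∑ k ∈ Finset.range n, Real.log (1 - Q * Q ^ k)) := by
    rw [Real.exp_sum]
    exact (Finset.prod_congr rfl fun k _ => (Real.exp_log (hnum k)).symm)
  rw [h1, h2]
  apply Real.exp_le_exp.mpr
  have hsum : Summable fun k : ℕ => Real.log (1 - Q * Q ^ k) :=
    summable_log_one_sub hQ0 hQ1 hQ0.le hQ1
  have := Summable.sum_le_tsum (Finset.range n) (f := fun k => -Real.log (1 - Q * Q ^ k))
    (fun k _ => by
      simp only [neg_nonneg]
      exact Real.log_nonpos (by nlinarith [hnum k, hQ0, pow_pos hQ0 k]) (by nlinarith [pow_pos hQ0 k]))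
    hsum.neg
  rw [tsum_neg] at this
  simp only [Finset.sum_neg_distrib] at this
  linarith

lemma qFact_pos {Q : ℝ} (hQ0 : 0 < Q) (hQ1 : Q < 1) (n : ℕ) : 0 < qFact Q n := by
  have h1Q : (0:ℝ) < 1 - Q := by linarith
  have := qFact_ge hQ0 hQ1 n
  nlinarith [Real.exp_pos (∑' k : ℕ, Real.log (1 - Q * Q ^ k)), pow_pos h1Q n,
    mul_pos (Real.exp_pos (∑' k : ℕ, Real.log (1 - Q * Q ^ k))) (pow_pos h1Q n)]

lemma bessel_summable {Q ν : ℝ} (hQ0 : 0 < Q) (hQ1 : Q < 1) (hν : ν > -1) {x : ℝ}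
    (hx : |x| * (1 - Q) < 1) :
    Summable fun i : ℕ => (-1:ℝ)^i / (qFact Q i * qGamma Q ((i:ℝ) + ν + 1)) * x ^ (2*i) := by
  have h1Q : (0:ℝ) < 1 - Q := by linarith
  set E := Real.exp (∑' k : ℕ, Real.log (1 - Q * Q ^ k)) with hE
  have hEpos : 0 < E := Real.exp_pos _
  set r := ((1 - Q) * |x|)^2 with hr
  have hr0 : 0 ≤ r := sq_nonneg _
  have hr1 : r < 1 := by
    have h0 : 0 ≤ (1-Q) * |x| := by positivity
    have h1 : (1-Q) * |x| < 1 := by nlinarith [abs_nonneg x]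
    nlinarith
  apply Summable.of_norm_bounded (g := fun i => (1-Q) ^ ν / E^2 * r ^ i)
  · exact (summable_geometric_of_lt_one hr0 hr1).mul_left _
  intro i
  have ht : (0:ℝ) < (i:ℝ) + ν + 1 := by
    have : (0:ℝ) ≤ (i:ℝ) := Nat.cast_nonneg i
    linarith
  have hG : 0 < qGamma Q ((i:ℝ)+ν+1) := qGamma_pos hQ0 hQ1 ht
  have hF : 0 < qFact Q i := qFact_pos hQ0 hQ1 i
  have hFb := qFact_ge hQ0 hQ1 i
  have hGb := qGamma_ge hQ0 hQ1 ht
  have hnorm : ‖(-1:ℝ)^i / (qFact Q i * qGamma Q ((i:ℝ)+ν+1)) * x ^ (2*i)‖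
      = |x| ^ (2*i) / (qFact Q i * qGamma Q ((i:ℝ)+ν+1)) := by
    rw [Real.norm_eq_abs, abs_mul, abs_div, abs_pow, abs_pow, abs_neg, abs_one, one_pow,
      abs_of_pos (mul_pos hF hG)]
    ring
  rw [hnorm, div_le_iff₀ (mul_pos hF hG)]
  have hFb' : E / (1-Q)^i ≤ qFact Q i := by
    rw [div_le_iff₀ (pow_pos h1Q i)]
    linarith
  have hprod : (E / (1-Q)^i) * (E * (1-Q)^(1-((i:ℝ)+ν+1))) ≤
      qFact Q i * qGamma Q ((i:ℝ)+ν+1) := by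
    apply mul_le_mul hFb' hGb _ hF.le
    positivity
  calc |x| ^ (2*i)
      = (1-Q)^ν / E^2 * r^i * ((E / (1-Q)^i) * (E * (1-Q)^(1-((i:ℝ)+ν+1)))) := by
        have e1 : ((1-Q):ℝ)^ν * (((1-Q))^(1-((i:ℝ)+ν+1)) * ((1-Q))^((i:ℝ))) = 1 := by
          rw [← Real.rpow_add h1Q, ← Real.rpow_add h1Q,
            show ν + ((1-((i:ℝ)+ν+1)) + (i:ℝ)) = 0 by ring, Real.rpow_zero]
        have e2 : ((1-Q):ℝ)^((i:ℝ)) = (1-Q)^i := Real.rpow_natCast _ i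
        have hx2 : r^i = ((1-Q)^i * (1-Q)^i) * (|x|^(2*i)) := by
          rw [hr, ← pow_mul, mul_pow, two_mul, pow_add]
        rw [hx2, ← e2]
        have hc : ((1-Q):ℝ)^((i:ℝ)) ≠ 0 := (Real.rpow_pos_of_pos h1Q _).ne'
        have hE2 : (E:ℝ)^2 ≠ 0 := by positivity
        have expand : ((1-Q):ℝ)^ν / E^2 * (((1-Q)^((i:ℝ)) * (1-Q)^((i:ℝ))) * |x|^(2*i)) *
            ((E / (1-Q)^((i:ℝ))) * (E * (1-Q)^(1-((i:ℝ)+ν+1)))) =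
            (((1-Q):ℝ)^ν * ((1-Q)^(1-((i:ℝ)+ν+1)) * (1-Q)^((i:ℝ)))) * (E^2/E^2) *
              ((1-Q)^((i:ℝ))/(1-Q)^((i:ℝ))) * |x|^(2*i) := by ring
        rw [expand, e1, div_self hE2, div_self hc, one_mul, mul_one, one_mul]
    _ ≤ (1-Q)^ν / E^2 * r^i * (qFact Q i * qGamma Q ((i:ℝ)+ν+1)) := by
        apply mul_le_mul_of_nonneg_left hprod
        positivity

/-- The q-derivative `∂^q_t f(t) = (f(qt) - f(t))/((q-1)t)`.
The `q⁻¹`-derivative is `qDeriv q⁻¹`. -/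
def qDeriv (q : ℝ) (f : ℝ → ℝ) (t : ℝ) : ℝ := (f (q * t) - f t) / ((q - 1) * t)

/-- The q-Pochhammer symbol `(a; q)_k = ∏_{l=0}^{k-1} (1 - a q^l)`. -/
def qPoch (a q : ℝ) (k : ℕ) : ℝ := ∏ l ∈ Finset.range k, (1 - a * q ^ l)

/-- The q-exponential `E_q(t) = ∑_{j=0}^∞ q^{j(j-1)/2} t^j/[j]_q!`. -/
def qExpE (q t : ℝ) : ℝ := ∑' j : ℕ, q ^ (j * (j - 1) / 2) * t ^ j / qFact q j

/-- `e_q(-u) := 1/E_q(u)` (intended for `u ≥ 0`); `qExpe q u` denotes `e_q(-u)`. -/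
def qExpe (q u : ℝ) : ℝ := (qExpE q u)⁻¹

/-- The first q-Bessel function `J^{(1)}_ν(x|q²)`. -/
def qBessel1 (q ν x : ℝ) : ℝ :=
  (x / (1 + q)) ^ ν *
    ∑' i : ℕ, (-1 : ℝ) ^ i / (qFact (q ^ 2) i * qGamma (q ^ 2) ((i : ℝ) + ν + 1)) *
      (x / (1 + q)) ^ (2 * i)

/-- The second q-Bessel function `J^{(2)}_ν(x|q²)`. -/
def qBessel2 (q ν x : ℝ) : ℝ :=
  q ^ (ν ^ 2) * (x / (1 + q)) ^ ν *
    ∑' i : ℕ, q ^ (2 * (i : ℝ) * ((i : ℝ) + ν)) * (-1 : ℝ) ^ i /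
        (qFact (q ^ 2) i * qGamma (q ^ 2) ((i : ℝ) + ν + 1)) *
      (x / (1 + q)) ^ (2 * i)

/-- The q-Laguerre polynomial `𝓛^{(α)}_j(u|q²)`. -/
def qLaguerre (q α : ℝ) (j : ℕ) (u : ℝ) : ℝ :=
  ∑ i ∈ Finset.range (j + 1),
    q ^ ((j - i) * (j - i + 1)) * (-u) ^ i / (qFact (q ^ 2) (j - i) * qFact (q ^ 2) i) *
      (qPoch (q ^ (2 * (i : ℝ) + 2 * α + 2)) (q ^ 2) (j - i) / (1 - q ^ 2) ^ (j - i))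

/-- The q-Laguerre polynomial `𝓛^{(α)}_j(u|q^{-2})`. -/
def qLaguerreInv (q α : ℝ) (j : ℕ) (u : ℝ) : ℝ :=
  q ^ (-(j : ℝ) * ((j : ℝ) + 1 + 2 * α)) *
    ∑ i ∈ Finset.range (j + 1),
      q ^ (2 * (i : ℝ) * ((i : ℝ) + α)) * (-u) ^ i / (qFact (q ^ 2) (j - i) * qFact (q ^ 2) i) *
        (qPoch (q ^ (2 * (i : ℝ) + 2 * α + 2)) (q ^ 2) (j - i) / (1 - q ^ 2) ^ (j - i))

/-- The finite Jackson q-integral `∫_0^a f(t) d_q t = (1-q) a ∑_{k=0}^∞ f(q^k a) q^k`. -/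
def jackson (q a : ℝ) (f : ℝ → ℝ) : ℝ := (1 - q) * a * ∑' k : ℕ, f (q ^ k * a) * q ^ k

/-- The infinite Jackson q-integral `∫_0^{γ·∞} f(t) d_q t = (1-q) γ ∑_{k=-∞}^∞ f(q^k γ) q^k`. -/
def jacksonInf (q γ : ℝ) (f : ℝ → ℝ) : ℝ := (1 - q) * γ * ∑' k : ℤ, f (q ^ k * γ) * q ^ k

/-- The first q-Hankel transform `𝓗̄^{q,β}_ν`. -/
def hankel1 (q μ ν β : ℝ) (f : ℝ → ℝ) (t : ℝ) : ℝ :=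
  (1 + q) / μ * jackson q (Real.sqrt (μ / ((1 - q ^ 2) * β)))
    (fun r => qBessel1 q ν ((1 + q) / μ * (r * t)) / (r * t) ^ ν * r ^ (2 * ν + 1) * f r)

/-- The second q-Hankel transform `𝓗^{q,γ}_ν`. -/
def hankel2 (q μ ν γ : ℝ) (f : ℝ → ℝ) (r : ℝ) : ℝ :=
  (1 + q) / μ * jacksonInf q γ
    (fun t => qBessel2 q ν (q * ((1 + q) / μ) * (r * t)) / (r * t) ^ ν * t ^ (2 * ν + 1) * f t)

/-- `∂^q_u (u^{-ν} J^{(1)}_ν(u|q²)) = -u · u^{-(ν+1)} J^{(1)}_{ν+1}(u|q²)`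
for `ν > -1` and `0 < u < 1/(1-q)`. -/

theorem qBessel1_qDeriv_div (q : ℝ) (hq0 : 0 < q) (hq1 : q < 1)
    (ν : ℝ) (hν : ν > -1) (u : ℝ) (hu0 : 0 < u) (hu1 : u < 1 / (1 - q)) :
    qDeriv q (fun s => s ^ (-ν) * qBessel1 q ν s) u =
      -u * (u ^ (-(ν + 1)) * qBessel1 q (ν + 1) u) := by
  have hC : (0:ℝ) < 1 + q := by linarith
  have h1q : (0:ℝ) < 1 - q := by linarith
  have hQ0 : 0 < q^2 := by positivity
  have hQ1 : q^2 < 1 := by nlinarith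
  have hu1' : u * (1 - q) < 1 := (lt_div_iff₀ h1q).mp hu1
  have hy0 : 0 < u / (1+q) := div_pos hu0 hC
  have hyb : |u/(1+q)| * (1 - q^2) < 1 := by
    rw [abs_of_pos hy0]
    have h2 : u/(1+q) * (1 - q^2) = u * (1-q) := by field_simp; ring
    rw [h2]; exact hu1'
  have hqy0 : 0 < q * (u/(1+q)) := by positivity
  have hqyb : |q * (u/(1+q))| * (1 - q^2) < 1 := by
    rw [abs_of_pos hqy0]
    have := hyb
    rw [abs_of_pos hy0] at this
    nlinarith
  have hSy : Summable (fun i : ℕ =>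
      (-1:ℝ)^i / (qFact (q^2) i * qGamma (q^2) ((i:ℝ)+ν+1)) * (u/(1+q))^(2*i)) :=
    bessel_summable hQ0 hQ1 hν hyb
  have hSqy : Summable (fun i : ℕ =>
      (-1:ℝ)^i / (qFact (q^2) i * qGamma (q^2) ((i:ℝ)+ν+1)) * (q*(u/(1+q)))^(2*i)) :=
    bessel_summable hQ0 hQ1 hν hqyb
  have hkey : ∀ μ s : ℝ, 0 < s → s ^ (-μ) * qBessel1 q μ s
      = 1/(1+q)^μ * ∑' i : ℕ,
          (-1:ℝ)^i / (qFact (q^2) i * qGamma (q^2) ((i:ℝ)+μ+1)) * (s/(1+q))^(2*i) := by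
    intro μ s hs
    rw [qBessel1, Real.div_rpow hs.le hC.le, Real.rpow_neg hs.le]
    have hsν : (s:ℝ) ^ μ ≠ 0 := (Real.rpow_pos_of_pos hs μ).ne'
    have hPν : ((1+q):ℝ)^μ ≠ 0 := (Real.rpow_pos_of_pos hC μ).ne'
    field_simp
  simp only [qDeriv]
  rw [hkey ν (q*u) (by positivity), hkey ν u hu0, hkey (ν+1) u hu0]
  rw [show q*u/(1+q) = q*(u/(1+q)) by ring]
  rw [← mul_sub, ← Summable.tsum_sub hSqy hSy]
  have hterm : ∀ i : ℕ,
      (-1:ℝ)^(i+1) / (qFact (q^2) (i+1) * qGamma (q^2) (((i+1:ℕ):ℝ)+ν+1)) * (q*(u/(1+q)))^(2*(i+1))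
      - (-1:ℝ)^(i+1) / (qFact (q^2) (i+1) * qGamma (q^2) (((i+1:ℕ):ℝ)+ν+1)) * (u/(1+q))^(2*(i+1))
      = ((1-q^2) * (u/(1+q))^2) *
        ((-1:ℝ)^i / (qFact (q^2) i * qGamma (q^2) ((i:ℝ)+(ν+1)+1)) * (u/(1+q))^(2*i)) := by
    intro i
    have hGarg : ((i+1 : ℕ):ℝ) + ν + 1 = (i:ℝ)+(ν+1)+1 := by push_cast; ring
    rw [hGarg]
    have hFact : qFact (q^2) (i+1) = qFact (q^2) i * qNum (q^2) ((i:ℝ)+1) :=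
      Finset.prod_range_succ _ i
    have hqNum : qNum (q^2) ((i:ℝ)+1) = (q^(2*(i+1)) - 1)/(q^2 - 1) := by
      rw [qNum, show ((i:ℝ)+1) = ((i+1:ℕ):ℝ) by push_cast; ring, Real.rpow_natCast, ← pow_mul]
    have hne1 : q^(2*(i+1)) - 1 ≠ 0 := by
      have : q^(2*(i+1)) < 1 := pow_lt_one₀ hq0.le hq1 (by omega)
      linarith
    have hne2 : q^2 - 1 ≠ 0 := by nlinarith
    have hF : qFact (q^2) i ≠ 0 := (qFact_pos hQ0 hQ1 i).ne'
    have hG : qGamma (q^2) ((i:ℝ)+(ν+1)+1) ≠ 0 := by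
      apply (qGamma_pos hQ0 hQ1 ?_).ne'
      have : (0:ℝ) ≤ (i:ℝ) := Nat.cast_nonneg i
      linarith
    rw [hFact, hqNum, pow_succ (-1:ℝ) i, mul_pow q (u/(1+q))]
    have hCne : (1+q : ℝ) ≠ 0 := hC.ne'
    simp only [div_pow]
    field_simp
    ring
  have hmain : (∑' i:ℕ,
      ((-1:ℝ)^i / (qFact (q^2) i * qGamma (q^2) ((i:ℝ)+ν+1)) * (q*(u/(1+q)))^(2*i)
       - (-1:ℝ)^i / (qFact (q^2) i * qGamma (q^2) ((i:ℝ)+ν+1)) * (u/(1+q))^(2*i)))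
      = ((1-q^2) * (u/(1+q))^2) *
        ∑' i:ℕ, (-1:ℝ)^i / (qFact (q^2) i * qGamma (q^2) ((i:ℝ)+(ν+1)+1)) * (u/(1+q))^(2*i) := by
    rw [Summable.tsum_eq_zero_add (hSqy.sub hSy)]

    rw [tsum_congr hterm, tsum_mul_left]
    norm_num
  rw [hmain]
  have hpow : ((1+q):ℝ)^(ν+1) = (1+q)^ν * (1+q) := Real.rpow_add_one hC.ne' ν
  rw [hpow]
  have hPν : ((1+q):ℝ)^ν ≠ 0 := (Real.rpow_pos_of_pos hC ν).ne'
  have hq1' : q - 1 ≠ 0 := by linarith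
  norm_num
  field_simp
  ring
end
end

section
/- For every real ν > 0 and every real u with 0 < u < 1/(1−q), the first q-Bessel function satisfies the recurrence u^{−(ν−1)} ( J^{(1)}_{ν+1}(u|q²) + J^{(1)}_{ν−1}(u|q²) ) = [2ν]_q · (qu)^{−ν} J^{(1)}_ν(qu|q²). -/
open scoped BigOperators

noncomputable section

namespace QB

open Real Filter

variable {Q : ℝ}

lemma rpow_lt_one' (hQ0 : 0 < Q) (hQ1 : Q < 1) {c : ℝ} (hc : 0 < c) : Q ^ c < 1 :=
  Real.rpow_lt_one hQ0.le hQ1 hc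

lemma one_sub_rpow_pos (hQ0 : 0 < Q) (hQ1 : Q < 1) {c : ℝ} (hc : 0 < c) :
    0 < 1 - Q ^ c := by
  have := rpow_lt_one' hQ0 hQ1 hc
  linarith

lemma summable_log_one_sub (hQ0 : 0 < Q) (hQ1 : Q < 1) {c : ℝ} (hc : 0 < c) :
    Summable fun k : ℕ => Real.log (1 - Q ^ ((k : ℝ) + c)) := by
  rw [← summable_neg_iff]
  have hQc : 0 < 1 - Q ^ c := one_sub_rpow_pos hQ0 hQ1 hc
  have hxeq : ∀ k : ℕ, Q ^ ((k : ℝ) + c) = Q ^ c * Q ^ k := by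
    intro k
    rw [Real.rpow_add hQ0, Real.rpow_natCast, mul_comm]
  apply Summable.of_nonneg_of_le
    (f := fun k : ℕ => (1 - Q ^ c)⁻¹ * Q ^ c * Q ^ k)
  · intro k
    have h0 : 0 < Q ^ ((k : ℝ) + c) := Real.rpow_pos_of_pos hQ0 _
    have h1 : Q ^ ((k : ℝ) + c) < 1 := rpow_lt_one' hQ0 hQ1 (by positivity)
    simp only [neg_nonneg]
    exact Real.log_nonpos (by linarith) (by linarith)
  · intro k
    set x := Q ^ ((k : ℝ) + c) with hxdef
    have hxpos : 0 < x := Real.rpow_pos_of_pos hQ0 _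
    have hxle : x ≤ Q ^ c := by
      rw [hxdef, hxeq k]
      have : Q ^ k ≤ 1 := pow_le_one₀ hQ0.le hQ1.le
      nlinarith [Real.rpow_pos_of_pos hQ0 c]
    have hx1 : 0 < 1 - x := by linarith
    have h2 : -Real.log (1 - x) = Real.log (1 - x)⁻¹ := (Real.log_inv _).symm
    rw [h2]
    have h3 : Real.log (1 - x)⁻¹ ≤ (1 - x)⁻¹ - 1 :=
      Real.log_le_sub_one_of_pos (by positivity)
    have h4 : (1 - x)⁻¹ - 1 = x / (1 - x) := by field_simp; ring
    have h5 : x / (1 - x) ≤ x / (1 - Q ^ c) := by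
      apply div_le_div_of_nonneg_left hxpos.le hQc
      linarith
    have h6 : x / (1 - Q ^ c) = (1 - Q ^ c)⁻¹ * Q ^ c * Q ^ k := by
      rw [hxdef, hxeq k]; ring
    linarith
  · exact (summable_geometric_of_lt_one hQ0.le hQ1).mul_left _

lemma qGamma_eq_exp (hQ0 : 0 < Q) (hQ1 : Q < 1) {t : ℝ} (ht : 0 < t) :
    qGamma Q t = (1 - Q) ^ (1 - t) *
      Real.exp ((∑' k : ℕ, Real.log (1 - Q ^ ((k : ℝ) + 1))) -
        ∑' k : ℕ, Real.log (1 - Q ^ ((k : ℝ) + t))) := by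
  have hnum : ∀ k : ℕ, (1 : ℝ) - Q ^ (k + 1) = 1 - Q ^ ((k : ℝ) + 1) := by
    intro k
    rw [show ((k : ℝ) + 1) = ((k + 1 : ℕ) : ℝ) by push_cast; ring, Real.rpow_natCast]
  have hden : ∀ k : ℕ, 0 < 1 - Q ^ ((k : ℝ) + t) := fun k =>
    one_sub_rpow_pos hQ0 hQ1 (by positivity)
  have hnum' : ∀ k : ℕ, 0 < 1 - Q ^ ((k : ℝ) + 1) := fun k =>
    one_sub_rpow_pos hQ0 hQ1 (by positivity)
  have hlog : ∀ k : ℕ,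
      Real.log ((1 - Q ^ ((k : ℝ) + 1)) / (1 - Q ^ ((k : ℝ) + t))) =
        Real.log (1 - Q ^ ((k : ℝ) + 1)) - Real.log (1 - Q ^ ((k : ℝ) + t)) :=
    fun k => Real.log_div (hnum' k).ne' (hden k).ne'
  have hsum : Summable fun k : ℕ =>
      Real.log ((1 - Q ^ ((k : ℝ) + 1)) / (1 - Q ^ ((k : ℝ) + t))) := by
    simp only [hlog]
    exact (summable_log_one_sub hQ0 hQ1 one_pos).sub (summable_log_one_sub hQ0 hQ1 ht)
  have hprod := Real.rexp_tsum_eq_tprod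
    (f := fun (k : ℕ) => (1 - Q ^ ((k : ℝ) + 1)) / (1 - Q ^ ((k : ℝ) + t)))
    (fun k => div_pos (hnum' k) (hden k)) hsum
  have key : (∏' (k : ℕ), (1 - Q ^ (k + 1)) / (1 - Q ^ ((k : ℝ) + t))) =
      Real.exp ((∑' k : ℕ, Real.log (1 - Q ^ ((k : ℝ) + 1))) -
        ∑' k : ℕ, Real.log (1 - Q ^ ((k : ℝ) + t))) := by
    calc ∏' (k : ℕ), (1 - Q ^ (k + 1)) / (1 - Q ^ ((k : ℝ) + t))
        = ∏' (k : ℕ), (1 - Q ^ ((k : ℝ) + 1)) / (1 - Q ^ ((k : ℝ) + t)) :=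
          tprod_congr fun k => by rw [hnum k]
      _ = Real.exp (∑' k : ℕ,
            Real.log ((1 - Q ^ ((k : ℝ) + 1)) / (1 - Q ^ ((k : ℝ) + t)))) := hprod.symm
      _ = _ := by
          rw [tsum_congr hlog,
            Summable.tsum_sub (summable_log_one_sub hQ0 hQ1 one_pos) (summable_log_one_sub hQ0 hQ1 ht)]
  unfold qGamma
  rw [key]

lemma qGamma_pos (hQ0 : 0 < Q) (hQ1 : Q < 1) {t : ℝ} (ht : 0 < t) :
    0 < qGamma Q t := by
  rw [qGamma_eq_exp hQ0 hQ1 ht]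
  have h1 : (0 : ℝ) < 1 - Q := by linarith
  positivity

lemma qNum_pos (hQ0 : 0 < Q) (hQ1 : Q < 1) {c : ℝ} (hc : 0 < c) :
    0 < qNum Q c := by
  unfold qNum
  have h1 : Q ^ c < 1 := rpow_lt_one' hQ0 hQ1 hc
  have h2 : Q ^ c - 1 < 0 := by linarith
  have h3 : Q - 1 < 0 := by linarith
  exact div_pos_of_neg_of_neg h2 h3

lemma qGamma_succ (hQ0 : 0 < Q) (hQ1 : Q < 1) {t : ℝ} (ht : 0 < t) :
    qGamma Q (t + 1) = qNum Q t * qGamma Q t := by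
  have hQ : (0 : ℝ) < 1 - Q := by linarith
  have hQt : 0 < 1 - Q ^ t := one_sub_rpow_pos hQ0 hQ1 ht
  rw [qGamma_eq_exp hQ0 hQ1 (by linarith : (0:ℝ) < t + 1), qGamma_eq_exp hQ0 hQ1 ht]
  have hL : (∑' k : ℕ, Real.log (1 - Q ^ ((k : ℝ) + t))) =
      Real.log (1 - Q ^ t) + ∑' k : ℕ, Real.log (1 - Q ^ ((k : ℝ) + (t + 1))) := by
    rw [Summable.tsum_eq_zero_add (summable_log_one_sub hQ0 hQ1 ht)]
    congr 1
    · norm_num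
    · exact tsum_congr fun k => by rw [show ((k + 1 : ℕ) : ℝ) + t = (k : ℝ) + (t + 1) by
        push_cast; ring]
  have hrpow : (1 - Q) ^ (1 - (t + 1)) = (1 - Q) ^ (1 - t) * (1 - Q)⁻¹ := by
    rw [show (1 - (t + 1)) = (1 - t) + (-1) by ring, Real.rpow_add hQ,
      Real.rpow_neg_one]
  rw [hrpow, hL]
  rw [show (∑' k : ℕ, Real.log (1 - Q ^ ((k : ℝ) + 1))) -
      (Real.log (1 - Q ^ t) + ∑' k : ℕ, Real.log (1 - Q ^ ((k : ℝ) + (t + 1)))) =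
      ((∑' k : ℕ, Real.log (1 - Q ^ ((k : ℝ) + 1))) -
        ∑' k : ℕ, Real.log (1 - Q ^ ((k : ℝ) + (t + 1)))) + (- Real.log (1 - Q ^ t)) by ring]
  rw [Real.exp_add, Real.exp_neg, Real.exp_log hQt]
  unfold qNum
  have : (Q ^ t - 1) / (Q - 1) = (1 - Q ^ t) / (1 - Q) := by
    rw [div_eq_div_iff (by linarith) (by linarith)]; ring
  rw [this]
  field_simp

lemma qFact_pos (hQ0 : 0 < Q) (hQ1 : Q < 1) (n : ℕ) : 0 < qFact Q n := by
  unfold qFact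
  exact Finset.prod_pos fun i _ => qNum_pos hQ0 hQ1 (by positivity)

lemma qFact_succ (n : ℕ) : qFact Q (n + 1) = qFact Q n * qNum Q ((n : ℝ) + 1) :=
  Finset.prod_range_succ _ _

end QB
namespace QB

set_option maxHeartbeats 1000000 in
lemma summable_bessel {q : ℝ} (hq0 : 0 < q) (hq1 : q < 1) {ν x : ℝ} (hν : -1 < ν)
    (hx : 0 < x) (hx1 : (1 - q ^ 2) * x < 1) :
    Summable fun i : ℕ =>
      (-1 : ℝ) ^ i / (qFact (q ^ 2) i * qGamma (q ^ 2) ((i : ℝ) + ν + 1)) * x ^ (2 * i) := by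
  set Q := q ^ 2 with hQdef
  have hQ0 : 0 < Q := by positivity
  have hQ1 : Q < 1 := by nlinarith
  set s := (1 - Q) * x with hs
  have hs0 : 0 < s := mul_pos (by linarith) hx
  have hs1 : s < 1 := hx1
  have hG : ∀ i : ℕ, 0 < qGamma Q ((i : ℝ) + ν + 1) := fun i =>
    qGamma_pos hQ0 hQ1 (by have := Nat.cast_nonneg (α := ℝ) i; linarith)
  have hF : ∀ i : ℕ, 0 < qFact Q i := fun i => qFact_pos hQ0 hQ1 i
  have hnorm : ∀ i : ℕ,
      ‖(-1 : ℝ) ^ i / (qFact Q i * qGamma Q ((i : ℝ) + ν + 1)) * x ^ (2 * i)‖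
      = x ^ (2 * i) / (qFact Q i * qGamma Q ((i : ℝ) + ν + 1)) := by
    intro i
    have h1 : 0 < qFact Q i * qGamma Q ((i : ℝ) + ν + 1) := mul_pos (hF i) (hG i)
    rw [Real.norm_eq_abs, abs_mul, abs_div, abs_pow, abs_neg, abs_one, one_pow,
      abs_of_pos h1, abs_pow, abs_of_pos hx]
    ring
  have h0 : Filter.Tendsto (fun i : ℕ => (Q : ℝ) ^ i) Filter.atTop (nhds 0) :=
    tendsto_pow_atTop_nhds_zero_of_lt_one hQ0.le hQ1
  have htend : Filter.Tendsto
      (fun i : ℕ => (1 - Q ^ ((i : ℝ) + 1)) * (1 - Q ^ ((i : ℝ) + ν + 1)))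
      Filter.atTop (nhds 1) := by
    have h1 := (Filter.Tendsto.const_sub (1:ℝ) (h0.const_mul Q)).mul
      (Filter.Tendsto.const_sub (1:ℝ) (h0.const_mul (Q ^ (ν + 1) : ℝ)))
    simp only [mul_zero, sub_zero, one_mul] at h1
    have hfun : (fun i : ℕ => (1 - Q ^ ((i : ℝ) + 1)) * (1 - Q ^ ((i : ℝ) + ν + 1))) =
        fun i : ℕ => (1 - Q * Q ^ i) * (1 - Q ^ (ν + 1) * Q ^ i) := by
      funext i
      rw [show (i : ℝ) + 1 = 1 + (i : ℝ) by ring, Real.rpow_add hQ0, Real.rpow_one,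
        Real.rpow_natCast, show (i : ℝ) + ν + 1 = (ν + 1) + (i : ℝ) by ring,
        Real.rpow_add hQ0, Real.rpow_natCast]
    rw [hfun]
    exact h1
  have heven : ∀ᶠ i : ℕ in Filter.atTop,
      s ≤ (1 - Q ^ ((i : ℝ) + 1)) * (1 - Q ^ ((i : ℝ) + ν + 1)) :=
    htend.eventually_const_le hs1
  apply summable_of_ratio_norm_eventually_le hs1
  filter_upwards [heven] with i hi
  rw [hnorm, hnorm]
  have hcast : ((i + 1 : ℕ) : ℝ) = (i : ℝ) + 1 := by push_cast; ring
  have hΓarg : ((i : ℝ) + 1) + ν + 1 = ((i : ℝ) + ν + 1) + 1 := by ring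
  have hiν : (0 : ℝ) < (i : ℝ) + ν + 1 := by
    have := Nat.cast_nonneg (α := ℝ) i; linarith
  have hGsucc : qGamma Q (((i + 1 : ℕ) : ℝ) + ν + 1) =
      qNum Q ((i : ℝ) + ν + 1) * qGamma Q ((i : ℝ) + ν + 1) := by
    rw [hcast, hΓarg, qGamma_succ hQ0 hQ1 hiν]
  have hFsucc : qFact Q (i + 1) = qFact Q i * qNum Q ((i : ℝ) + 1) := qFact_succ i
  set A := qNum Q ((i : ℝ) + ν + 1) with hA
  set B := qNum Q ((i : ℝ) + 1) with hB
  set F := qFact Q i with hFd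
  set G := qGamma Q ((i : ℝ) + ν + 1) with hGd
  have hApos : 0 < A := qNum_pos hQ0 hQ1 hiν
  have hBpos : 0 < B := qNum_pos hQ0 hQ1 (by have := Nat.cast_nonneg (α := ℝ) i; linarith)
  have hQne : Q - 1 ≠ 0 := sub_ne_zero_of_ne (ne_of_lt hQ1)
  have hAeq : A * (1 - Q) = 1 - Q ^ ((i : ℝ) + ν + 1) := by
    rw [hA]; unfold qNum
    rw [div_mul_eq_mul_div, div_eq_iff hQne]
    ring
  have hBeq : B * (1 - Q) = 1 - Q ^ ((i : ℝ) + 1) := by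
    rw [hB]; unfold qNum
    rw [div_mul_eq_mul_div, div_eq_iff hQne]
    ring
  have hkey : x ^ 2 ≤ s * A * B := by
    have h2 : s * (B * (1 - Q)) * (A * (1 - Q)) ≥ s * s := by
      rw [hAeq, hBeq]
      nlinarith [one_sub_rpow_pos hQ0 hQ1 hiν,
        one_sub_rpow_pos hQ0 hQ1 (show (0:ℝ) < (i:ℝ) + 1 by
          have := Nat.cast_nonneg (α := ℝ) i; linarith)]
    have h3 : s * s = x ^ 2 * (1 - Q) ^ 2 := by rw [hs]; ring
    have hQpos : (0 : ℝ) < (1 - Q) ^ 2 := by nlinarith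
    nlinarith
  have hFi : 0 < F := hF i
  have hGi : 0 < G := hG i
  have hxp : x ^ (2 * (i + 1)) = x ^ (2 * i) * x ^ 2 := by
    rw [show 2 * (i + 1) = 2 * i + 2 by ring, pow_add]
  rw [hGsucc, hFsucc, hxp, ← mul_div_assoc,
    div_le_div_iff₀ (mul_pos (mul_pos hFi hBpos) (mul_pos hApos hGi)) (mul_pos hFi hGi)]
  nlinarith [mul_le_mul_of_nonneg_left hkey
    (show (0:ℝ) ≤ x ^ (2 * i) * F * G by positivity)]

end QB
namespace QB

lemma rpow_sq_eq {q : ℝ} (hq0 : 0 < q) (c : ℝ) : ((q ^ 2 : ℝ)) ^ c = q ^ (2 * c) := by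
  rw [← Real.rpow_natCast q 2, ← Real.rpow_mul hq0.le]
  norm_num

set_option maxHeartbeats 1000000 in
lemma term_succ {q ν x : ℝ} (hq0 : 0 < q) (hq1 : q < 1) (hν : 0 < ν) (i : ℕ) :
    qNum q (2 * ν) * ((-1 : ℝ) ^ (i + 1) /
        (qFact (q ^ 2) (i + 1) * qGamma (q ^ 2) (((i + 1 : ℕ) : ℝ) + ν + 1)) *
        (q * x) ^ (2 * (i + 1)))
      - (1 + q) * ((-1 : ℝ) ^ (i + 1) /
        (qFact (q ^ 2) (i + 1) * qGamma (q ^ 2) (((i + 1 : ℕ) : ℝ) + (ν - 1) + 1)) *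
        x ^ (2 * (i + 1)))
    = (1 + q) * x ^ 2 * ((-1 : ℝ) ^ i /
        (qFact (q ^ 2) i * qGamma (q ^ 2) ((i : ℝ) + (ν + 1) + 1)) * x ^ (2 * i)) := by
  have hQ0 : (0 : ℝ) < q ^ 2 := by positivity
  have hQ1 : (q : ℝ) ^ 2 < 1 := by nlinarith
  have hiν : (0 : ℝ) < (i : ℝ) + ν + 1 := by have := Nat.cast_nonneg (α := ℝ) i; linarith
  have hcast : ((i + 1 : ℕ) : ℝ) = (i : ℝ) + 1 := by push_cast; ring
  have harg1 : ((i : ℝ) + 1) + ν + 1 = ((i : ℝ) + ν + 1) + 1 := by ring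
  have harg2 : ((i : ℝ) + 1) + (ν - 1) + 1 = (i : ℝ) + ν + 1 := by ring
  have harg3 : (i : ℝ) + (ν + 1) + 1 = ((i : ℝ) + ν + 1) + 1 := by ring
  rw [hcast, harg1, harg2, harg3, qGamma_succ hQ0 hQ1 hiν, qFact_succ i]
  set A := qNum (q ^ 2) ((i : ℝ) + ν + 1) with hAd
  set B := qNum (q ^ 2) ((i : ℝ) + 1) with hBd
  set F := qFact (q ^ 2) i with hFd
  set G := qGamma (q ^ 2) ((i : ℝ) + ν + 1) with hGd
  have hApos : 0 < A := qNum_pos hQ0 hQ1 hiν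
  have hBpos : 0 < B := qNum_pos hQ0 hQ1
    (by have := Nat.cast_nonneg (α := ℝ) i; linarith)
  have hFpos : 0 < F := qFact_pos hQ0 hQ1 i
  have hGpos : 0 < G := qGamma_pos hQ0 hQ1 hiν
  set P := q ^ (2 * (i : ℝ) + 2) with hPd
  set R := q ^ (2 * ν) with hRd
  have hPpos : 0 < P := Real.rpow_pos_of_pos hq0 _
  have hRpos : 0 < R := Real.rpow_pos_of_pos hq0 _
  have hq1ne : q - 1 ≠ 0 := sub_ne_zero_of_ne (ne_of_lt hq1)
  have hq2ne : q ^ 2 - 1 ≠ 0 := sub_ne_zero_of_ne (ne_of_lt hQ1)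
  have hAeq : A = (P * R - 1) / (q ^ 2 - 1) := by
    rw [hAd]; unfold qNum
    congr 1
    rw [rpow_sq_eq hq0, ← Real.rpow_add hq0]
    congr 1
    ring
  have hBeq : B = (P - 1) / (q ^ 2 - 1) := by
    rw [hBd]; unfold qNum
    congr 1
    rw [rpow_sq_eq hq0]
    congr 2
    ring
  have hNum : qNum q (2 * ν) = (R - 1) / (q - 1) := by unfold qNum; rw [hRd]
  have hPR1 : P * R - 1 ≠ 0 := by
    have : P * R < 1 := by
      rw [hPd, hRd, ← Real.rpow_add hq0]
      exact Real.rpow_lt_one hq0.le hq1 (by have := Nat.cast_nonneg (α := ℝ) i; linarith)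
    linarith
  have hP1 : P - 1 ≠ 0 := by
    have : P < 1 :=
      Real.rpow_lt_one hq0.le hq1 (by have := Nat.cast_nonneg (α := ℝ) i; linarith)
    linarith
  have hqx : (q * x) ^ (2 * (i + 1)) = P * (x ^ (2 * i) * x ^ 2) := by
    rw [mul_pow, show 2 * (i + 1) = 2 * i + 2 by ring, pow_add x]
    congr 1
    rw [hPd, ← Real.rpow_natCast q (2 * i + 2)]
    congr 1
    push_cast; ring
  have hxp : x ^ (2 * (i + 1)) = x ^ (2 * i) * x ^ 2 := by
    rw [show 2 * (i + 1) = 2 * i + 2 by ring, pow_add]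
  have hsgn : (-1 : ℝ) ^ (i + 1) = -(-1 : ℝ) ^ i := by rw [pow_succ]; ring
  rw [hqx, hxp, hsgn, hNum, hAeq, hBeq]
  have hPR1' : R * P - 1 ≠ 0 := by rw [mul_comm]; exact hPR1
  field_simp
  ring

lemma term_zero {q ν x : ℝ} (hq0 : 0 < q) (hq1 : q < 1) (hν : 0 < ν) :
    qNum q (2 * ν) * ((-1 : ℝ) ^ (0 : ℕ) /
        (qFact (q ^ 2) 0 * qGamma (q ^ 2) (((0 : ℕ) : ℝ) + ν + 1)) * (q * x) ^ (2 * 0))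
      - (1 + q) * ((-1 : ℝ) ^ (0 : ℕ) /
        (qFact (q ^ 2) 0 * qGamma (q ^ 2) (((0 : ℕ) : ℝ) + (ν - 1) + 1)) * x ^ (2 * 0))
    = 0 := by
  have hQ0 : (0 : ℝ) < q ^ 2 := by positivity
  have hQ1 : (q : ℝ) ^ 2 < 1 := by nlinarith
  have hF0 : qFact (q ^ 2) 0 = 1 := by unfold qFact; simp
  have harg1 : ((0 : ℕ) : ℝ) + ν + 1 = ν + 1 := by push_cast; ring
  have harg2 : ((0 : ℕ) : ℝ) + (ν - 1) + 1 = ν := by push_cast; ring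
  rw [hF0, harg1, harg2, qGamma_succ hQ0 hQ1 hν]
  have hGpos : 0 < qGamma (q ^ 2) ν := qGamma_pos hQ0 hQ1 hν
  have hApos : 0 < qNum (q ^ 2) ν := qNum_pos hQ0 hQ1 hν
  have hq1ne : q - 1 ≠ 0 := sub_ne_zero_of_ne (ne_of_lt hq1)
  have hq2ne : q ^ 2 - 1 ≠ 0 := sub_ne_zero_of_ne (ne_of_lt hQ1)
  have hkey : qNum q (2 * ν) = (1 + q) * qNum (q ^ 2) ν := by
    unfold qNum
    rw [rpow_sq_eq hq0]
    field_simp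
    ring
  rw [hkey]
  simp only [pow_zero, mul_zero]
  field_simp
  ring

end QB
open QB

/-- recurrence for the first q-Bessel function:
`u^{-(ν-1)} (J^{(1)}_{ν+1}(u|q²) + J^{(1)}_{ν-1}(u|q²)) = [2ν]_q (qu)^{-ν} J^{(1)}_ν(qu|q²)`
for `ν > 0` and `0 < u < 1/(1-q)`. -/
theorem qBessel1_recurrence (q : ℝ) (hq0 : 0 < q) (hq1 : q < 1)
    (ν : ℝ) (hν : ν > 0) (u : ℝ) (hu0 : 0 < u) (hu1 : u < 1 / (1 - q)) :
    u ^ (-(ν - 1)) * (qBessel1 q (ν + 1) u + qBessel1 q (ν - 1) u) =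
      qNum q (2 * ν) * ((q * u) ^ (-ν) * qBessel1 q ν (q * u)) := by
  have h1q : (0 : ℝ) < 1 + q := by linarith
  have h1q' : (0 : ℝ) < 1 - q := by linarith
  simp only [qBessel1]
  have hqu : q * u / (1 + q) = q * (u / (1 + q)) := by ring
  rw [hqu]
  set x := u / (1 + q) with hxdef
  have hx0 : 0 < x := by rw [hxdef]; positivity
  have hQx : (1 - q ^ 2) * x < 1 := by
    have h2 : (1 - q ^ 2) * x = (1 - q) * u := by
      rw [hxdef]; field_simp; ring
    have h3 : u * (1 - q) < 1 := by
      have := (lt_div_iff₀ h1q').mp hu1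
      linarith [this]
    rw [h2]; linarith
  have hQxq : (1 - q ^ 2) * (q * x) < 1 := by
    have hq2 : (0 : ℝ) < 1 - q ^ 2 := by nlinarith
    nlinarith
  have hs1 := summable_bessel hq0 hq1 (show -1 < ν + 1 by linarith) hx0 hQx
  have hs2 := summable_bessel hq0 hq1 (show -1 < ν - 1 by linarith) hx0 hQx
  have hs3 := summable_bessel hq0 hq1 (show -1 < ν by linarith) (mul_pos hq0 hx0) hQxq
  set S1 := ∑' i : ℕ, (-1 : ℝ) ^ i /
      (qFact (q ^ 2) i * qGamma (q ^ 2) ((i : ℝ) + (ν + 1) + 1)) * x ^ (2 * i) with hS1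
  set S2 := ∑' i : ℕ, (-1 : ℝ) ^ i /
      (qFact (q ^ 2) i * qGamma (q ^ 2) ((i : ℝ) + (ν - 1) + 1)) * x ^ (2 * i) with hS2
  set S3 := ∑' i : ℕ, (-1 : ℝ) ^ i /
      (qFact (q ^ 2) i * qGamma (q ^ 2) ((i : ℝ) + ν + 1)) * (q * x) ^ (2 * i) with hS3
  -- the key series identity
  have key : qNum q (2 * ν) * S3 - (1 + q) * S2 = (1 + q) * (x ^ 2 * S1) := by
    have hsub : qNum q (2 * ν) * S3 - (1 + q) * S2 =
        ∑' i : ℕ, (qNum q (2 * ν) * ((-1 : ℝ) ^ i /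
            (qFact (q ^ 2) i * qGamma (q ^ 2) ((i : ℝ) + ν + 1)) * (q * x) ^ (2 * i))
          - (1 + q) * ((-1 : ℝ) ^ i /
            (qFact (q ^ 2) i * qGamma (q ^ 2) ((i : ℝ) + (ν - 1) + 1)) * x ^ (2 * i))) := by
      rw [Summable.tsum_sub (hs3.mul_left _) (hs2.mul_left _), tsum_mul_left, tsum_mul_left,
        hS3, hS2]
    rw [hsub, Summable.tsum_eq_zero_add ((hs3.mul_left _).sub (hs2.mul_left _))]
    rw [term_zero hq0 hq1 hν, zero_add]
    rw [tsum_congr (fun i => term_succ hq0 hq1 hν i), tsum_mul_left]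
    ring
  -- rpow algebra
  have hd1 : (x : ℝ) ^ (ν + 1) = u ^ (ν + 1) / (1 + q) ^ (ν + 1) := by
    rw [hxdef, Real.div_rpow hu0.le h1q.le]
  have hd2 : (x : ℝ) ^ (ν - 1) = u ^ (ν - 1) / (1 + q) ^ (ν - 1) := by
    rw [hxdef, Real.div_rpow hu0.le h1q.le]
  have hd3 : (q * x : ℝ) ^ ν = (q * u) ^ ν / (1 + q) ^ ν := by
    rw [hxdef, show q * (u / (1 + q)) = q * u / (1 + q) by ring,
      Real.div_rpow (by positivity) h1q.le]
  have hu2 : u ^ (-(ν - 1)) * u ^ (ν + 1) = u ^ 2 := by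
    rw [← Real.rpow_add hu0, show -(ν - 1) + (ν + 1) = ((2 : ℕ) : ℝ) by push_cast; ring,
      Real.rpow_natCast]
  have hu3 : u ^ (-(ν - 1)) * u ^ (ν - 1) = 1 := by
    rw [← Real.rpow_add hu0, show -(ν - 1) + (ν - 1) = 0 by ring, Real.rpow_zero]
  have hqu2 : (q * u) ^ (-ν) * (q * u) ^ ν = 1 := by
    rw [← Real.rpow_add (by positivity), show -ν + ν = 0 by ring, Real.rpow_zero]
  have hp1 : ((1 : ℝ) + q) ^ (ν + 1) = (1 + q) ^ ν * (1 + q) := by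
    rw [Real.rpow_add h1q, Real.rpow_one]
  have hp2 : ((1 : ℝ) + q) ^ (ν - 1) = (1 + q) ^ ν / (1 + q) := by
    rw [show ν - 1 = ν + (-1) by ring, Real.rpow_add h1q, Real.rpow_neg_one]
    ring
  have hpν : (0 : ℝ) < (1 + q) ^ ν := Real.rpow_pos_of_pos h1q _
  have hueq : u = x * (1 + q) := by rw [hxdef]; field_simp
  -- final algebra
  rw [hd1, hd2, hd3, hp1, hp2]
  have expand : u ^ (-(ν - 1)) * (u ^ (ν + 1) / ((1 + q) ^ ν * (1 + q)) * S1 +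
      u ^ (ν - 1) / ((1 + q) ^ ν / (1 + q)) * S2) =
      (u ^ (-(ν - 1)) * u ^ (ν + 1)) * S1 / ((1 + q) ^ ν * (1 + q)) +
      (u ^ (-(ν - 1)) * u ^ (ν - 1)) * S2 * (1 + q) / (1 + q) ^ ν := by
    field_simp
  rw [expand, hu2, hu3]
  have expand2 : qNum q (2 * ν) * ((q * u) ^ (-ν) * ((q * u) ^ ν / (1 + q) ^ ν * S3)) =
      qNum q (2 * ν) * (((q * u) ^ (-ν) * (q * u) ^ ν) * S3 / (1 + q) ^ ν) := by
    ring
  rw [expand2, hqu2]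
  rw [hueq]
  rw [div_add_div _ _ (mul_pos hpν h1q).ne' hpν.ne', mul_div_assoc',
    div_eq_div_iff (mul_ne_zero (mul_pos hpν h1q).ne' hpν.ne') hpν.ne']
  linear_combination (-((1 + q) ^ ν * (1 + q) ^ ν * (1 + q))) * key
end
end

section
/- For every real ν > 0 and every real u > 0, the second q-Bessel function satisfies the recurrence u^{−(ν−1)} ( J^{(2)}_{ν+1}(qu|q²) + J^{(2)}_{ν−1}(qu|q²) ) = [2ν]_q · (qu)^{−ν} J^{(2)}_ν(u|q²). -/
open scoped BigOperators

noncomputable section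

section Aux
open Real
set_option maxHeartbeats 1000000
variable {q : ℝ}

lemma one_sub_rpow_pos (hq0 : 0 < q) (hq1 : q < 1) {t : ℝ} (ht : 0 < t) : 0 < 1 - q ^ t := by
  have : q ^ t < 1 := Real.rpow_lt_one hq0.le hq1 ht
  linarith

lemma qNum_eq (hq1 : q < 1) (t : ℝ) : qNum q t = (1 - q ^ t) / (1 - q) := by
  unfold qNum
  rw [div_eq_div_iff (by linarith) (by linarith)]
  ring

lemma qNum_pos (hq0 : 0 < q) (hq1 : q < 1) {t : ℝ} (ht : 0 < t) : 0 < qNum q t := by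
  rw [qNum_eq hq1]
  exact div_pos (one_sub_rpow_pos hq0 hq1 ht) (by linarith)

lemma one_le_qNum (hq0 : 0 < q) (hq1 : q < 1) {t : ℝ} (ht : 1 ≤ t) : 1 ≤ qNum q t := by
  rw [qNum_eq hq1]
  rw [le_div_iff₀ (by linarith)]
  have := Real.rpow_le_rpow_of_exponent_ge hq0 hq1.le ht
  rw [Real.rpow_one] at this
  linarith

lemma qNum_mono (hq0 : 0 < q) (hq1 : q < 1) {s t : ℝ} (hst : s ≤ t) : qNum q s ≤ qNum q t := by
  rw [qNum_eq hq1, qNum_eq hq1]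
  have := Real.rpow_le_rpow_of_exponent_ge hq0 hq1.le hst
  apply div_le_div_of_nonneg_right ?_ (by linarith)
  linarith

lemma qFact_pos_s3 (hq0 : 0 < q) (hq1 : q < 1) (n : ℕ) : 0 < qFact q n :=
  Finset.prod_pos fun i _ => qNum_pos hq0 hq1 (by positivity)

lemma one_le_qFact (hq0 : 0 < q) (hq1 : q < 1) (n : ℕ) : 1 ≤ qFact q n := by
  unfold qFact
  have := Finset.prod_le_prod (s := Finset.range n) (f := fun _ : ℕ => (1:ℝ))
    (g := fun i : ℕ => qNum q ((i:ℝ) + 1)) (fun _ _ => zero_le_one)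
    (fun i _ => one_le_qNum hq0 hq1 (by have : (0:ℝ) ≤ (i:ℝ) := Nat.cast_nonneg i; linarith))
  simpa using this

lemma qFact_succ (n : ℕ) : qFact q (n+1) = qFact q n * qNum q ((n:ℝ)+1) :=
  Finset.prod_range_succ _ _

lemma rpow_nat_one (hq0 : 0 < q) (k : ℕ) : q ^ (k + 1) = q ^ ((k:ℝ) + 1) := by
  rw [← Real.rpow_natCast q (k+1)]
  push_cast
  ring_nf

lemma summable_log (hq0 : 0 < q) (hq1 : q < 1) {t : ℝ} (ht : 0 < t) :
    Summable fun k : ℕ => Real.log (1 - q ^ ((k:ℝ) + t)) := by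
  have hqt : q ^ t < 1 := Real.rpow_lt_one hq0.le hq1 ht
  have hqtpos : 0 < q ^ t := Real.rpow_pos_of_pos hq0 t
  rw [← summable_abs_iff]
  refine Summable.of_nonneg_of_le (f := fun k => (q ^ t / (1 - q ^ t)) * q ^ k)
    (fun k => abs_nonneg _) ?_
    ((summable_geometric_of_lt_one (by positivity) hq1).mul_left _)
  · intro k
    have hk : q ^ ((k:ℝ) + t) = q ^ k * q ^ t := by
      rw [Real.rpow_add hq0, Real.rpow_natCast]
    have hkpos : 0 < q ^ ((k:ℝ)+t) := Real.rpow_pos_of_pos hq0 _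
    have hkle : q ^ ((k:ℝ)+t) ≤ q ^ t := by
      rw [hk]
      nlinarith [pow_le_one₀ hq0.le hq1.le (n := k), pow_pos hq0 k]
    have h1 : 0 < 1 - q ^ ((k:ℝ)+t) := by linarith
    have hlog : Real.log (1 - q ^ ((k:ℝ)+t)) ≤ 0 := by
      apply Real.log_nonpos (by linarith) (by linarith)
    rw [abs_of_nonpos hlog]
    have := Real.log_le_sub_one_of_pos (x := (1 - q ^ ((k:ℝ)+t))⁻¹) (by positivity)
    rw [Real.log_inv] at this
    have hinv : (1 - q ^ ((k:ℝ)+t))⁻¹ - 1 = q ^ ((k:ℝ)+t) / (1 - q ^ ((k:ℝ)+t)) := by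
      field_simp
      ring
    rw [hinv] at this
    have hb : q ^ ((k:ℝ)+t) / (1 - q ^ ((k:ℝ)+t)) ≤ q ^ t / (1 - q ^ t) * q ^ k := by
      rw [hk] at h1 hkle ⊢
      have h2 : 0 < 1 - q ^ t := by linarith
      have hpk : (0:ℝ) < q ^ k := pow_pos hq0 k
      rw [div_mul_eq_mul_div, div_le_div_iff₀ h1 h2]
      nlinarith
    linarith

lemma hasProd_gamma (hq0 : 0 < q) (hq1 : q < 1) {t : ℝ} (ht : 0 < t) :
    HasProd (fun k : ℕ => (1 - q ^ (k + 1)) / (1 - q ^ ((k:ℝ) + t)))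
      (Real.exp (∑' k : ℕ, (Real.log (1 - q ^ ((k:ℝ) + 1)) - Real.log (1 - q ^ ((k:ℝ) + t))))) := by
  have hs := ((summable_log hq0 hq1 one_pos).sub (summable_log hq0 hq1 ht)).hasSum
  have := hs.rexp
  have heq : (rexp ∘ fun k : ℕ => (Real.log (1 - q ^ ((k:ℝ) + 1)) - Real.log (1 - q ^ ((k:ℝ) + t))))
      = fun k : ℕ => (1 - q ^ (k + 1)) / (1 - q ^ ((k:ℝ) + t)) := by
    funext k
    simp only [Function.comp_apply]
    have h1 : 0 < 1 - q ^ ((k:ℝ)+1) := one_sub_rpow_pos hq0 hq1 (by positivity)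
    have h2 : 0 < 1 - q ^ ((k:ℝ)+t) := one_sub_rpow_pos hq0 hq1 (by positivity)
    rw [← Real.log_div (ne_of_gt h1) (ne_of_gt h2), Real.exp_log (by positivity),
      rpow_nat_one hq0]
  rwa [heq] at this

lemma qGamma_eq (hq0 : 0 < q) (hq1 : q < 1) {t : ℝ} (ht : 0 < t) :
    qGamma q t = (1 - q) ^ (1 - t) *
      Real.exp (∑' k : ℕ, (Real.log (1 - q ^ ((k:ℝ) + 1)) - Real.log (1 - q ^ ((k:ℝ) + t)))) := by
  unfold qGamma
  rw [(hasProd_gamma hq0 hq1 ht).tprod_eq]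

lemma qGamma_pos_s3 (hq0 : 0 < q) (hq1 : q < 1) {t : ℝ} (ht : 0 < t) : 0 < qGamma q t := by
  rw [qGamma_eq hq0 hq1 ht]
  have h1 : (0:ℝ) < 1 - q := by linarith
  positivity

lemma telescope_log (hq0 : 0 < q) (hq1 : q < 1) {t : ℝ} (ht : 0 < t) :
    ∑' k : ℕ, (Real.log (1 - q ^ ((k:ℝ) + t)) - Real.log (1 - q ^ ((k:ℝ) + (t+1)))) =
      Real.log (1 - q ^ t) := by
  set g : ℕ → ℝ := fun k => Real.log (1 - q ^ ((k:ℝ) + t)) with hg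
  have hshift : ∀ k : ℕ, Real.log (1 - q ^ ((k:ℝ) + (t+1))) = g (k+1) := by
    intro k
    simp only [hg]
    push_cast
    ring_nf
  have hsum : Summable (fun k : ℕ => g k - g (k+1)) := by
    have h2 : Summable (fun k : ℕ => Real.log (1 - q ^ ((k:ℝ) + (t+1)))) :=
      summable_log hq0 hq1 (by linarith)
    have h2' : Summable (fun k : ℕ => g (k+1)) := by
      apply h2.congr
      intro k
      rw [hshift k]
    exact (summable_log hq0 hq1 ht).sub h2'
  have htend : Filter.Tendsto (fun n : ℕ => g n) Filter.atTop (nhds 0) := by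
    have hq : Filter.Tendsto (fun n : ℕ => q ^ ((n:ℝ) + t)) Filter.atTop (nhds 0) := by
      have : ∀ n : ℕ, q ^ ((n:ℝ) + t) = q ^ n * q ^ t := fun n => by
        rw [Real.rpow_add hq0, Real.rpow_natCast]
      rw [funext this]
      simpa using (tendsto_pow_atTop_nhds_zero_of_lt_one hq0.le hq1).mul_const (q ^ t)
    have : Filter.Tendsto (fun n : ℕ => 1 - q ^ ((n:ℝ) + t)) Filter.atTop (nhds 1) := by
      simpa using (tendsto_const_nhds (x := (1:ℝ))).sub hq
    have hcont : Filter.Tendsto (fun n : ℕ => Real.log (1 - q ^ ((n:ℝ) + t)))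
        Filter.atTop (nhds (Real.log 1)) :=
      (Real.continuousAt_log (by norm_num)).tendsto.comp this
    simpa using hcont
  have hps : Filter.Tendsto (fun n : ℕ => ∑ k ∈ Finset.range n, (g k - g (k+1)))
      Filter.atTop (nhds (g 0 - 0)) := by
    have : ∀ n, ∑ k ∈ Finset.range n, (g k - g (k+1)) = g 0 - g n :=
      fun n => Finset.sum_range_sub' g n
    rw [funext this]
    exact (tendsto_const_nhds.sub htend)
  have := hsum.hasSum.tendsto_sum_nat
  have heq := tendsto_nhds_unique this hps
  calc ∑' k : ℕ, (Real.log (1 - q ^ ((k:ℝ) + t)) - Real.log (1 - q ^ ((k:ℝ) + (t+1))))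
      = ∑' k : ℕ, (g k - g (k+1)) := by
        apply tsum_congr; intro k; rw [hshift k]
    _ = g 0 - 0 := heq
    _ = Real.log (1 - q ^ t) := by simp [hg]

lemma qGamma_succ (hq0 : 0 < q) (hq1 : q < 1) {t : ℝ} (ht : 0 < t) :
    qGamma q (t+1) = qNum q t * qGamma q t := by
  have h1q : (0:ℝ) < 1 - q := by linarith
  rw [qGamma_eq hq0 hq1 (by linarith : (0:ℝ) < t+1), qGamma_eq hq0 hq1 ht]
  have hsplit : ∀ k : ℕ, Real.log (1 - q ^ ((k:ℝ) + 1)) - Real.log (1 - q ^ ((k:ℝ) + (t+1)))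
      = (Real.log (1 - q ^ ((k:ℝ) + 1)) - Real.log (1 - q ^ ((k:ℝ) + t)))
        + (Real.log (1 - q ^ ((k:ℝ) + t)) - Real.log (1 - q ^ ((k:ℝ) + (t+1)))) := by
    intro k; ring
  have hs1 : Summable (fun k : ℕ => Real.log (1 - q ^ ((k:ℝ) + 1)) - Real.log (1 - q ^ ((k:ℝ) + t))) :=
    (summable_log hq0 hq1 one_pos).sub (summable_log hq0 hq1 ht)
  have hs2 : Summable (fun k : ℕ => Real.log (1 - q ^ ((k:ℝ) + t)) - Real.log (1 - q ^ ((k:ℝ) + (t+1)))) :=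
    (summable_log hq0 hq1 ht).sub (summable_log hq0 hq1 (by linarith))
  have hts : ∑' k : ℕ, (Real.log (1 - q ^ ((k:ℝ) + 1)) - Real.log (1 - q ^ ((k:ℝ) + (t+1))))
      = (∑' k : ℕ, (Real.log (1 - q ^ ((k:ℝ) + 1)) - Real.log (1 - q ^ ((k:ℝ) + t))))
        + ∑' k : ℕ, (Real.log (1 - q ^ ((k:ℝ) + t)) - Real.log (1 - q ^ ((k:ℝ) + (t+1)))) := by
    rw [← Summable.tsum_add hs1 hs2]
    exact tsum_congr fun k => hsplit k
  rw [hts, telescope_log hq0 hq1 ht, Real.exp_add, Real.exp_log (one_sub_rpow_pos hq0 hq1 ht)]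
  rw [qNum_eq hq1]
  have hpow : (1 - q) ^ (1 - (t+1)) = (1 - q) ^ (1 - t) / (1 - q) := by
    have he : 1 - (t+1) = (1-t) - 1 := by ring
    rw [he, Real.rpow_sub h1q, Real.rpow_one]
  rw [hpow]
  field_simp

lemma summable_bessel (hq0 : 0 < q) (hq1 : q < 1) (μ : ℝ) (hμ : 0 < μ + 1) {x : ℝ} (hx : 0 < x) :
    Summable (fun i : ℕ => q ^ (2*(i:ℝ)*((i:ℝ)+μ)) * (-1:ℝ)^i /
      (qFact (q^2) i * qGamma (q^2) ((i:ℝ)+μ+1)) * x^(2*i)) := by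
  have hQ0 : 0 < q^2 := by positivity
  have hQ1 : q^2 < 1 := by nlinarith
  set a : ℕ → ℝ := fun i => q ^ (2*(i:ℝ)*((i:ℝ)+μ)) * (-1:ℝ)^i /
      (qFact (q^2) i * qGamma (q^2) ((i:ℝ)+μ+1)) * x^(2*i) with ha
  have hGpos : ∀ i : ℕ, 0 < qGamma (q^2) ((i:ℝ)+μ+1) := fun i =>
    qGamma_pos_s3 hQ0 hQ1 (by have : (0:ℝ) ≤ (i:ℝ) := Nat.cast_nonneg i; linarith)
  have hFpos : ∀ i : ℕ, 0 < qFact (q^2) i := fun i => qFact_pos_s3 hQ0 hQ1 i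
  set c : ℕ → ℝ := fun i => -(q ^ (2*(2*(i:ℝ)+μ+1)) * x^2 /
      (qNum (q^2) ((i:ℝ)+1) * qNum (q^2) ((i:ℝ)+μ+1))) with hc
  have hrec : ∀ i : ℕ, a (i+1) = a i * c i := by
    intro i
    have hcast : ((i+1:ℕ):ℝ) = (i:ℝ) + 1 := by push_cast; ring
    have hqpow : q ^ (2*((i+1:ℕ):ℝ)*(((i+1:ℕ):ℝ)+μ)) =
        q ^ (2*(i:ℝ)*((i:ℝ)+μ)) * q ^ (2*(2*(i:ℝ)+μ+1)) := by
      rw [← Real.rpow_add hq0]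
      congr 1
      rw [hcast]; ring
    have hxpow : x ^ (2*(i+1)) = x ^ (2*i) * x^2 := by
      have h2 : 2*(i+1) = 2*i+2 := by ring
      rw [h2, pow_add]
    have hG : qGamma (q^2) (((i+1:ℕ):ℝ)+μ+1) =
        qNum (q^2) ((i:ℝ)+μ+1) * qGamma (q^2) ((i:ℝ)+μ+1) := by
      rw [hcast]
      have h : (i:ℝ) + 1 + μ + 1 = ((i:ℝ) + μ + 1) + 1 := by ring
      rw [h, qGamma_succ hQ0 hQ1 (by have : (0:ℝ) ≤ (i:ℝ) := Nat.cast_nonneg i; linarith)]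
    have hF : qFact (q^2) (i+1) = qFact (q^2) i * qNum (q^2) ((i:ℝ)+1) := qFact_succ i
    have hN1 : 0 < qNum (q^2) ((i:ℝ)+1) :=
      qNum_pos hQ0 hQ1 (by have : (0:ℝ) ≤ (i:ℝ) := Nat.cast_nonneg i; linarith)
    have hN2 : 0 < qNum (q^2) ((i:ℝ)+μ+1) :=
      qNum_pos hQ0 hQ1 (by have : (0:ℝ) ≤ (i:ℝ) := Nat.cast_nonneg i; linarith)
    simp only [ha, hc]
    rw [hqpow, hxpow, hG, hF, pow_succ]
    have e1 := ne_of_gt (hGpos i)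
    have e2 := ne_of_gt (hFpos i)
    field_simp
  have hm : 0 < qNum (q^2) (μ+1) := qNum_pos hQ0 hQ1 hμ
  have hcb : ∀ i : ℕ, ‖c i‖ ≤ (q ^ (2*(μ+1)) * x^2 / qNum (q^2) (μ+1)) * (q^4)^i := by
    intro i
    have hN1 : 1 ≤ qNum (q^2) ((i:ℝ)+1) :=
      one_le_qNum hQ0 hQ1 (by have : (0:ℝ) ≤ (i:ℝ) := Nat.cast_nonneg i; linarith)
    have hN2 : qNum (q^2) (μ+1) ≤ qNum (q^2) ((i:ℝ)+μ+1) :=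
      qNum_mono hQ0 hQ1 (by have : (0:ℝ) ≤ (i:ℝ) := Nat.cast_nonneg i; linarith)
    have hqsplit : q ^ (2*(2*(i:ℝ)+μ+1)) = (q^4)^i * q ^ (2*(μ+1)) := by
      rw [← Real.rpow_natCast (q^4) i, ← Real.rpow_natCast q 4, ← Real.rpow_mul hq0.le,
        ← Real.rpow_add hq0]
      congr 1
      push_cast; ring
    have hp4 : (0:ℝ) < (q^4)^i := by positivity
    have hqp : (0:ℝ) < q ^ (2*(μ+1)) := Real.rpow_pos_of_pos hq0 _
    simp only [hc, norm_neg, Real.norm_eq_abs]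
    have hqp : (0:ℝ) < q ^ (2*(2*(i:ℝ)+μ+1)) := Real.rpow_pos_of_pos hq0 _
    have hN1' : 0 < qNum (q^2) ((i:ℝ)+1) := by linarith
    have hN2' : 0 < qNum (q^2) ((i:ℝ)+μ+1) := by linarith
    rw [abs_of_nonneg (by positivity)]
    rw [hqsplit]
    have hprod : qNum (q^2) (μ+1) ≤ qNum (q^2) ((i:ℝ)+1) * qNum (q^2) ((i:ℝ)+μ+1) := by
      nlinarith
    calc (q^4)^i * q ^ (2*(μ+1)) * x^2 / (qNum (q^2) ((i:ℝ)+1) * qNum (q^2) ((i:ℝ)+μ+1))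
        ≤ (q^4)^i * q ^ (2*(μ+1)) * x^2 / qNum (q^2) (μ+1) :=
          div_le_div_of_nonneg_left (by positivity) (by positivity) hprod
      _ = q ^ (2*(μ+1)) * x^2 / qNum (q^2) (μ+1) * (q^4)^i := by ring
  have hq4 : (q^4 : ℝ) < 1 := by nlinarith
  have htend : Filter.Tendsto (fun i : ℕ => (q ^ (2*(μ+1)) * x^2 / qNum (q^2) (μ+1)) * (q^4)^i)
      Filter.atTop (nhds 0) := by
    simpa using (tendsto_pow_atTop_nhds_zero_of_lt_one (by positivity) hq4).const_mul
      (q ^ (2*(μ+1)) * x^2 / qNum (q^2) (μ+1))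
  have hev : ∀ᶠ i in Filter.atTop, ‖c i‖ ≤ 1/2 := by
    filter_upwards [htend.eventually (gt_mem_nhds (by norm_num : (0:ℝ) < 1/2))] with i hi
    calc ‖c i‖ ≤ _ := hcb i
      _ ≤ 1/2 := hi.le
  apply summable_of_ratio_norm_eventually_le (by norm_num : (1:ℝ)/2 < 1)
  filter_upwards [hev] with i hi
  rw [hrec i, norm_mul]
  calc ‖a i‖ * ‖c i‖ ≤ ‖a i‖ * (1/2) := mul_le_mul_of_nonneg_left hi (norm_nonneg _)
    _ = 1/2 * ‖a i‖ := by ring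

end Aux

/-- recurrence for the second q-Bessel function:
`u^{-(ν-1)} (J^{(2)}_{ν+1}(qu|q²) + J^{(2)}_{ν-1}(qu|q²)) = [2ν]_q (qu)^{-ν} J^{(2)}_ν(u|q²)`
for `ν > 0` and `u > 0`. -/
theorem qBessel2_recurrence (q : ℝ) (hq0 : 0 < q) (hq1 : q < 1)
    (ν : ℝ) (hν : ν > 0) (u : ℝ) (hu0 : 0 < u) :
    u ^ (-(ν - 1)) * (qBessel2 q (ν + 1) (q * u) + qBessel2 q (ν - 1) (q * u)) =
      qNum q (2 * ν) * ((q * u) ^ (-ν) * qBessel2 q ν u) := by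

  classical
  have hw : (0:ℝ) < 1 + q := by linarith
  have hQ0 : (0:ℝ) < q^2 := by positivity
  have hQ1 : q^2 < 1 := by nlinarith
  have hqu : (0:ℝ) < q * u := by positivity
  have hy : (0:ℝ) < q * u / (1 + q) := by positivity
  have hz : (0:ℝ) < u / (1 + q) := by positivity
  unfold qBessel2
  set y := q * u / (1 + q) with hydef
  set z := u / (1 + q) with hzdef
  set A : ℕ → ℝ := fun i => q ^ (2*(i:ℝ)*((i:ℝ)+(ν+1))) * (-1:ℝ)^i /
      (qFact (q^2) i * qGamma (q^2) ((i:ℝ)+(ν+1)+1)) * y^(2*i) with hA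
  set B : ℕ → ℝ := fun i => q ^ (2*(i:ℝ)*((i:ℝ)+(ν-1))) * (-1:ℝ)^i /
      (qFact (q^2) i * qGamma (q^2) ((i:ℝ)+(ν-1)+1)) * y^(2*i) with hB
  set C : ℕ → ℝ := fun i => q ^ (2*(i:ℝ)*((i:ℝ)+ν)) * (-1:ℝ)^i /
      (qFact (q^2) i * qGamma (q^2) ((i:ℝ)+ν+1)) * z^(2*i) with hC
  have hSA : Summable A := summable_bessel hq0 hq1 (ν+1) (by linarith) hy
  have hSB : Summable B := summable_bessel hq0 hq1 (ν-1) (by linarith) hy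
  have hSC : Summable C := summable_bessel hq0 hq1 ν (by linarith) hz
  have hSB' : Summable (fun i => B (i+1)) := (summable_nat_add_iff 1).2 hSB
  have hSC' : Summable (fun i => C (i+1)) := (summable_nat_add_iff 1).2 hSC
  -- log helpers
  have hqne : ∀ e : ℝ, q ^ e ≠ 0 := fun e => (Real.rpow_pos_of_pos hq0 e).ne'
  have hlogy : Real.log y = Real.log q + Real.log u - Real.log (1+q) := by
    rw [hydef, Real.log_div (by positivity) (by positivity), Real.log_mul hq0.ne' hu0.ne']
  have hlogz : Real.log z = Real.log u - Real.log (1+q) := by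
    rw [hzdef, Real.log_div (by positivity) (by positivity)]
  have hlogqu : Real.log (q*u) = Real.log q + Real.log u := Real.log_mul hq0.ne' hu0.ne'
  -- the core q-number identity
  have hcore : ∀ i : ℕ, qNum (q^2) ((i:ℝ)+ν+1) - q^(2*ν) * qNum (q^2) ((i:ℝ)+1)
      = qNum q (2*ν) / (1+q) := by
    intro i
    have hsq : ∀ s : ℝ, ((q^2:ℝ)) ^ s = q ^ (2*s) := by
      intro s
      rw [← Real.rpow_natCast q 2, ← Real.rpow_mul hq0.le]
      norm_num
    rw [qNum_eq hQ1, qNum_eq hQ1, qNum_eq hq1, hsq, hsq]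
    have e1 : q ^ (2*((i:ℝ)+ν+1)) = q ^ (2*ν) * q ^ (2*((i:ℝ)+1)) := by
      rw [← Real.rpow_add hq0]; congr 1; ring
    have h2 : (1:ℝ) - q^2 = (1-q)*(1+q) := by ring
    rw [e1, h2]
    field_simp
    ring
  have hcore0 : qNum q (2*ν) = (1+q) * qNum (q^2) ν := by
    have hsq : ((q^2:ℝ)) ^ ν = q ^ (2*ν) := by
      rw [← Real.rpow_natCast q 2, ← Real.rpow_mul hq0.le]
      norm_num
    rw [qNum_eq hQ1, qNum_eq hq1, hsq]
    have h2 : (1:ℝ) - q^2 = (1-q)*(1+q) := by ring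
    have hne1 : (1:ℝ) - q ≠ 0 := by intro h; nlinarith
    have hne2 : (1:ℝ) + q ≠ 0 := hw.ne'
    rw [h2, mul_div_assoc', mul_comm ((1:ℝ)+q) _, mul_div_mul_right _ _ hne2]
  -- the j = 0 matching term
  have k0 : u ^ (-(ν-1)) * (q ^ ((ν-1)^2) * y ^ (ν-1)) * B 0
      = qNum q (2*ν) * ((q*u) ^ (-ν) * (q ^ (ν^2) * z ^ ν)) * C 0 := by
    have hB0 : B 0 = 1 / qGamma (q^2) ν := by
      simp only [hB]
      rw [show ((0:ℕ):ℝ) + (ν-1) + 1 = ν by push_cast; ring]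
      rw [show qFact (q^2) 0 = 1 from Finset.prod_range_zero _]
      norm_num
    have hC0 : C 0 = 1 / (qNum (q^2) ν * qGamma (q^2) ν) := by
      simp only [hC]
      rw [show ((0:ℕ):ℝ) + ν + 1 = ν + 1 by push_cast; ring]
      rw [show qFact (q^2) 0 = 1 from Finset.prod_range_zero _]
      rw [qGamma_succ hQ0 hQ1 hν]
      norm_num
    have hGν : (0:ℝ) < qGamma (q^2) ν := qGamma_pos_s3 hQ0 hQ1 hν
    have hNν : (0:ℝ) < qNum (q^2) ν := qNum_pos hQ0 hQ1 hν
    have pure2 : u ^ (-(ν-1)) * (q ^ ((ν-1)^2) * y ^ (ν-1))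
        = q ^ (ν^2-ν) * (1+q) ^ (-(ν-1)) := by
      have hL : (0:ℝ) < u ^ (-(ν-1)) * (q ^ ((ν-1)^2) * y ^ (ν-1)) := by positivity
      have hR : (0:ℝ) < q ^ (ν^2-ν) * (1+q) ^ (-(ν-1)) := by positivity
      rw [← Real.exp_log hL, ← Real.exp_log hR]
      congr 1
      repeat rw [Real.log_mul (by positivity) (by positivity)]
      simp only [Real.log_rpow hq0, Real.log_rpow hu0, Real.log_rpow hw, Real.log_rpow hy]
      rw [hlogy]
      ring
    have pure3 : (q*u) ^ (-ν) * (q ^ (ν^2) * z ^ ν) = q ^ (ν^2-ν) * (1+q) ^ (-ν) := by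
      have hL : (0:ℝ) < (q*u) ^ (-ν) * (q ^ (ν^2) * z ^ ν) := by positivity
      have hR : (0:ℝ) < q ^ (ν^2-ν) * (1+q) ^ (-ν) := by positivity
      rw [← Real.exp_log hL, ← Real.exp_log hR]
      congr 1
      repeat rw [Real.log_mul (by positivity) (by positivity)]
      simp only [Real.log_rpow hq0, Real.log_rpow hqu, Real.log_rpow hw, Real.log_rpow hz]
      rw [hlogz, hlogqu]
      ring
    have hwsplit : (1+q) ^ (-(ν-1)) = (1+q) * (1+q) ^ (-ν) := by
      rw [show -(ν-1) = 1 + -ν by ring, Real.rpow_add hw, Real.rpow_one]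
    rw [hB0, hC0, pure2, pure3, hcore0, hwsplit]
    field_simp
  -- the matching of shifted terms
  have key : ∀ i : ℕ, u ^ (-(ν-1)) * (q ^ ((ν+1)^2) * y ^ (ν+1)) * A i
      + u ^ (-(ν-1)) * (q ^ ((ν-1)^2) * y ^ (ν-1)) * B (i+1)
      = qNum q (2*ν) * ((q*u) ^ (-ν) * (q ^ (ν^2) * z ^ ν)) * C (i+1) := by
    intro i
    have hi0 : (0:ℝ) ≤ (i:ℝ) := Nat.cast_nonneg i
    have hG : (0:ℝ) < qGamma (q^2) ((i:ℝ)+ν+1) := qGamma_pos_s3 hQ0 hQ1 (by linarith)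
    have hφ : (0:ℝ) < qNum (q^2) ((i:ℝ)+1) := qNum_pos hQ0 hQ1 (by linarith)
    have hψ : (0:ℝ) < qNum (q^2) ((i:ℝ)+ν+1) := qNum_pos hQ0 hQ1 (by linarith)
    have hF : (0:ℝ) < qFact (q^2) i := qFact_pos_s3 hQ0 hQ1 i
    have hGA : qGamma (q^2) ((i:ℝ)+(ν+1)+1)
        = qNum (q^2) ((i:ℝ)+ν+1) * qGamma (q^2) ((i:ℝ)+ν+1) := by
      rw [show (i:ℝ)+(ν+1)+1 = ((i:ℝ)+ν+1)+1 by ring, qGamma_succ hQ0 hQ1 (by linarith)]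
    have hGB : qGamma (q^2) (((i+1:ℕ):ℝ)+(ν-1)+1) = qGamma (q^2) ((i:ℝ)+ν+1) := by
      rw [show ((i+1:ℕ):ℝ)+(ν-1)+1 = (i:ℝ)+ν+1 by push_cast; ring]
    have hGC : qGamma (q^2) (((i+1:ℕ):ℝ)+ν+1)
        = qNum (q^2) ((i:ℝ)+ν+1) * qGamma (q^2) ((i:ℝ)+ν+1) := by
      rw [show ((i+1:ℕ):ℝ)+ν+1 = ((i:ℝ)+ν+1)+1 by push_cast; ring,
        qGamma_succ hQ0 hQ1 (by linarith)]
    have hFs : qFact (q^2) (i+1) = qFact (q^2) i * qNum (q^2) ((i:ℝ)+1) := qFact_succ i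
    have hcast : ((i+1:ℕ):ℝ) = (i:ℝ)+1 := by push_cast; ring
    -- monomial computations
    set κ : ℝ := q ^ (2*(i:ℝ)^2+2*(i:ℝ)*ν+4*(i:ℝ)+ν^2+ν+2) * u ^ (2*i+2) *
      (1+q) ^ (-(ν+2*(i:ℝ)+1)) with hκ
    have pureA : u ^ (-(ν-1)) * (q ^ ((ν+1)^2) * y ^ (ν+1)) *
        (q ^ (2*(i:ℝ)*((i:ℝ)+(ν+1))) * y ^ (2*i)) = q ^ (2*ν) * κ := by
      have hL : (0:ℝ) < u ^ (-(ν-1)) * (q ^ ((ν+1)^2) * y ^ (ν+1)) *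
          (q ^ (2*(i:ℝ)*((i:ℝ)+(ν+1))) * y ^ (2*i)) := by positivity
      have hR : (0:ℝ) < q ^ (2*ν) * κ := by rw [hκ]; positivity
      rw [← Real.exp_log hL, ← Real.exp_log hR]
      congr 1
      rw [hκ]
      repeat rw [Real.log_mul (by positivity) (by positivity)]
      simp only [Real.log_rpow hq0, Real.log_rpow hu0, Real.log_rpow hw, Real.log_rpow hy,
        Real.log_pow]
      rw [hlogy]
      push_cast
      ring
    have pureB : u ^ (-(ν-1)) * (q ^ ((ν-1)^2) * y ^ (ν-1)) *
        (q ^ (2*((i:ℝ)+1)*(((i:ℝ)+1)+(ν-1))) * y ^ (2*(i+1))) = κ := by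
      have hL : (0:ℝ) < u ^ (-(ν-1)) * (q ^ ((ν-1)^2) * y ^ (ν-1)) *
          (q ^ (2*((i:ℝ)+1)*(((i:ℝ)+1)+(ν-1))) * y ^ (2*(i+1))) := by positivity
      have hR : (0:ℝ) < κ := by rw [hκ]; positivity
      rw [← Real.exp_log hL, ← Real.exp_log hR]
      congr 1
      rw [hκ]
      repeat rw [Real.log_mul (by positivity) (by positivity)]
      simp only [Real.log_rpow hq0, Real.log_rpow hu0, Real.log_rpow hw, Real.log_rpow hy,
        Real.log_pow]
      rw [hlogy]
      push_cast
      ring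
    have pureC : (q*u) ^ (-ν) * (q ^ (ν^2) * z ^ ν) *
        (q ^ (2*((i:ℝ)+1)*(((i:ℝ)+1)+ν)) * z ^ (2*(i+1))) = κ / (1+q) := by
      have hL : (0:ℝ) < (q*u) ^ (-ν) * (q ^ (ν^2) * z ^ ν) *
          (q ^ (2*((i:ℝ)+1)*(((i:ℝ)+1)+ν)) * z ^ (2*(i+1))) := by positivity
      have hR : (0:ℝ) < κ / (1+q) := by rw [hκ]; positivity
      rw [← Real.exp_log hL, ← Real.exp_log hR]
      congr 1
      rw [hκ]
      rw [Real.log_div (by positivity) (by positivity)]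
      repeat rw [Real.log_mul (by positivity) (by positivity)]
      simp only [Real.log_rpow hq0, Real.log_rpow hu0, Real.log_rpow hw, Real.log_rpow hz,
        Real.log_rpow hqu, Real.log_pow]
      rw [hlogz, hlogqu]
      push_cast
      ring
    simp only [hA, hB, hC]
    rw [hGA, hGB, hGC, hFs, hcast]
    have hφinv : qNum (q^2) ((i:ℝ)+1) * (qNum (q^2) ((i:ℝ)+1))⁻¹ = 1 := mul_inv_cancel₀ hφ.ne'
    have hψinv : qNum (q^2) ((i:ℝ)+ν+1) * (qNum (q^2) ((i:ℝ)+ν+1))⁻¹ = 1 :=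
      mul_inv_cancel₀ hψ.ne'
    linear_combination ((-1:ℝ)^i / (qFact (q^2) i * qNum (q^2) ((i:ℝ)+ν+1) *
        qGamma (q^2) ((i:ℝ)+ν+1))) * pureA
      + ((-1:ℝ)^(i+1) / (qFact (q^2) i * qNum (q^2) ((i:ℝ)+1) *
        qGamma (q^2) ((i:ℝ)+ν+1))) * pureB
      - (qNum q (2*ν) * (-1:ℝ)^(i+1) / (qFact (q^2) i * qNum (q^2) ((i:ℝ)+1) *
        qNum (q^2) ((i:ℝ)+ν+1) * qGamma (q^2) ((i:ℝ)+ν+1))) * pureC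
      + ((-1:ℝ)^(i+1) * κ / (qFact (q^2) i * qNum (q^2) ((i:ℝ)+1) *
        qNum (q^2) ((i:ℝ)+ν+1) * qGamma (q^2) ((i:ℝ)+ν+1))) * (hcore i)
      - ((-1:ℝ)^i * κ * q^(2*ν) / (qFact (q^2) i * qNum (q^2) ((i:ℝ)+ν+1) *
        qGamma (q^2) ((i:ℝ)+ν+1))) * hφinv
      + ((-1:ℝ)^i * κ / (qFact (q^2) i * qNum (q^2) ((i:ℝ)+1) *
        qGamma (q^2) ((i:ℝ)+ν+1))) * hψinv
  rw [Summable.tsum_eq_zero_add hSB, Summable.tsum_eq_zero_add hSC]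
  have hsum : u ^ (-(ν-1)) * (q ^ ((ν+1)^2) * y ^ (ν+1)) * (∑' i, A i)
      + u ^ (-(ν-1)) * (q ^ ((ν-1)^2) * y ^ (ν-1)) * (∑' i, B (i+1))
      = qNum q (2*ν) * ((q*u) ^ (-ν) * (q ^ (ν^2) * z ^ ν)) * (∑' i, C (i+1)) := by
    rw [← tsum_mul_left, ← tsum_mul_left, ← tsum_mul_left,
      ← Summable.tsum_add (hSA.mul_left _) (hSB'.mul_left _)]
    exact tsum_congr key
  linear_combination hsum + k0
end
end

section
/- For every real ν > 0 and every real u > 0, the second q-Bessel function satisfies ∂^q_u ( u^{ν} J^{(2)}_ν(u|q²) ) = q^{ν} u^{ν} J^{(2)}_{ν−1}(qu|q²). -/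
open scoped BigOperators

noncomputable section

namespace QAux

open Real Filter Topology

variable {Q : ℝ}

lemma den_pos (hQ0 : 0 < Q) (hQ1 : Q < 1) {t : ℝ} (ht : 0 < t) (k : ℕ) :
    0 < 1 - Q ^ ((k : ℝ) + t) := by
  have : Q ^ ((k : ℝ) + t) < 1 :=
    Real.rpow_lt_one hQ0.le hQ1 (by positivity)
  linarith

lemma num_pos (hQ0 : 0 < Q) (hQ1 : Q < 1) (k : ℕ) : 0 < 1 - Q ^ (k + 1) := by
  have : Q ^ (k + 1) < 1 := pow_lt_one₀ hQ0.le hQ1 (Nat.succ_ne_zero k)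
  linarith

lemma summable_log_den (hQ0 : 0 < Q) (hQ1 : Q < 1) {t : ℝ} (ht : 0 < t) :
    Summable (fun k : ℕ => Real.log (1 - Q ^ ((k : ℝ) + t))) := by
  have hQt1 : Q ^ t < 1 := Real.rpow_lt_one hQ0.le hQ1 ht
  have hQtpos : 0 < Q ^ t := Real.rpow_pos_of_pos hQ0 t
  apply Summable.of_norm_bounded (g := fun k : ℕ => (Q ^ t / (1 - Q ^ t)) * Q ^ k)
    ((summable_geometric_of_lt_one hQ0.le hQ1).mul_left _)
  intro k
  have hak : Q ^ ((k : ℝ) + t) = Q ^ t * Q ^ k := by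
    rw [Real.rpow_add hQ0, Real.rpow_natCast]; ring
  have hk1 : (Q : ℝ) ^ k ≤ 1 := pow_le_one₀ hQ0.le hQ1.le
  have hkpos : (0 : ℝ) < Q ^ k := by positivity
  have h1 : 0 < Q ^ ((k : ℝ) + t) := Real.rpow_pos_of_pos hQ0 _
  have h2 : Q ^ ((k : ℝ) + t) ≤ Q ^ t := by nlinarith
  have h3 : 0 < 1 - Q ^ ((k : ℝ) + t) := by linarith
  have h4 : Real.log (1 - Q ^ ((k : ℝ) + t)) ≤ 0 := Real.log_nonpos (by linarith) (by linarith)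
  have e1 : Real.log ((1 - Q ^ ((k : ℝ) + t))⁻¹) ≤ (1 - Q ^ ((k : ℝ) + t))⁻¹ - 1 :=
    Real.log_le_sub_one_of_pos (by positivity)
  rw [Real.log_inv] at e1
  have e2 : (1 - Q ^ ((k : ℝ) + t))⁻¹ - 1 = Q ^ ((k : ℝ) + t) / (1 - Q ^ ((k : ℝ) + t)) := by
    field_simp
    ring
  have e3 : Q ^ ((k : ℝ) + t) / (1 - Q ^ ((k : ℝ) + t)) ≤ Q ^ ((k : ℝ) + t) / (1 - Q ^ t) := by
    apply div_le_div_of_nonneg_left h1.le (by linarith) (by linarith)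
  have e4 : Q ^ ((k : ℝ) + t) / (1 - Q ^ t) = Q ^ t / (1 - Q ^ t) * Q ^ k := by
    rw [hak]; ring
  rw [Real.norm_eq_abs, abs_of_nonpos h4]
  linarith

lemma summable_log_num (hQ0 : 0 < Q) (hQ1 : Q < 1) :
    Summable (fun k : ℕ => Real.log (1 - Q ^ (k + 1))) := by
  apply (summable_log_den hQ0 hQ1 (t := 1) one_pos).congr
  intro k
  congr 2
  rw [← Real.rpow_natCast Q (k + 1)]
  push_cast
  ring_nf

lemma tprod_eq_exp (g : ℕ → ℝ) (hg : ∀ n, 0 < g n)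
    (hs : Summable fun n => Real.log (g n)) :
    ∏' n, g n = Real.exp (∑' n, Real.log (g n)) := by
  have h := Real.rexp_tsum_eq_tprod (f := g) hg hs
  exact h.symm

lemma qGamma_eq (hQ0 : 0 < Q) (hQ1 : Q < 1) {t : ℝ} (ht : 0 < t) :
    qGamma Q t = (1 - Q) ^ (1 - t) *
      Real.exp (∑' k : ℕ, (Real.log (1 - Q ^ (k + 1)) - Real.log (1 - Q ^ ((k : ℝ) + t)))) := by
  unfold qGamma
  congr 1
  rw [tprod_eq_exp _ (fun k => div_pos (num_pos hQ0 hQ1 k) (den_pos hQ0 hQ1 ht k))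
    (by
      apply ((summable_log_num hQ0 hQ1).sub (summable_log_den hQ0 hQ1 ht)).congr
      intro k
      rw [Real.log_div (num_pos hQ0 hQ1 k).ne' (den_pos hQ0 hQ1 ht k).ne'])]
  congr 1
  exact tsum_congr fun k =>
    Real.log_div (num_pos hQ0 hQ1 k).ne' (den_pos hQ0 hQ1 ht k).ne'

lemma qGamma_pos (hQ0 : 0 < Q) (hQ1 : Q < 1) {t : ℝ} (ht : 0 < t) :
    0 < qGamma Q t := by
  rw [qGamma_eq hQ0 hQ1 ht]
  have h1Q : (0:ℝ) < 1 - Q := by linarith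
  exact mul_pos (Real.rpow_pos_of_pos h1Q _) (Real.exp_pos _)

lemma qNum_pos (hQ0 : 0 < Q) (hQ1 : Q < 1) {t : ℝ} (ht : 0 < t) :
    0 < qNum Q t := by
  unfold qNum
  have h1 : Q ^ t < 1 := Real.rpow_lt_one hQ0.le hQ1 ht
  apply div_pos_of_neg_of_neg <;> linarith

set_option maxHeartbeats 1000000 in
lemma qGamma_add_one (hQ0 : 0 < Q) (hQ1 : Q < 1) {t : ℝ} (ht : 0 < t) :
    qGamma Q (t + 1) = qNum Q t * qGamma Q t := by
  have hSnum := summable_log_num hQ0 hQ1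
  have hSden := summable_log_den hQ0 hQ1 ht
  have hSden' : Summable (fun k : ℕ => Real.log (1 - Q ^ (((k + 1 : ℕ) : ℝ) + t))) :=
    (summable_nat_add_iff 1).2 hSden
  rw [qGamma_eq hQ0 hQ1 (by linarith : (0:ℝ) < t + 1), qGamma_eq hQ0 hQ1 ht]
  have harg : ∀ k : ℕ, (k : ℝ) + (t + 1) = ((k + 1 : ℕ) : ℝ) + t := by
    intro k; push_cast; ring
  have key : (∑' k : ℕ, (Real.log (1 - Q ^ (k + 1)) - Real.log (1 - Q ^ ((k : ℝ) + (t + 1)))))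
      = Real.log (1 - Q ^ t) +
        (∑' k : ℕ, (Real.log (1 - Q ^ (k + 1)) - Real.log (1 - Q ^ ((k : ℝ) + t)))) := by
    have h1 : (∑' k : ℕ, (Real.log (1 - Q ^ (k + 1)) - Real.log (1 - Q ^ ((k : ℝ) + (t + 1)))))
        = (∑' k : ℕ, Real.log (1 - Q ^ (k + 1)))
          - ∑' k : ℕ, Real.log (1 - Q ^ (((k + 1 : ℕ) : ℝ) + t)) := by
      rw [← Summable.tsum_sub hSnum hSden']
      exact tsum_congr fun k => by rw [harg k]
    have h2 : (∑' k : ℕ, Real.log (1 - Q ^ ((k : ℝ) + t)))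
        = Real.log (1 - Q ^ (((0 : ℕ) : ℝ) + t)) + ∑' k : ℕ, Real.log (1 - Q ^ (((k + 1 : ℕ) : ℝ) + t)) := by
      exact Summable.tsum_eq_zero_add hSden
    rw [Summable.tsum_sub hSnum hSden, h1, h2]
    push_cast
    simp only [zero_add]
    ring
  rw [key]
  have hQt1 : Q ^ t < 1 := Real.rpow_lt_one hQ0.le hQ1 ht
  have hQtpos : 0 < Q ^ t := Real.rpow_pos_of_pos hQ0 t
  have h1Q : (0:ℝ) < 1 - Q := by linarith
  rw [Real.exp_add, Real.exp_log (by linarith : (0:ℝ) < 1 - Q ^ t)]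
  have hrp : (1 - Q) ^ (1 - (t + 1)) = (1 - Q) ^ (1 - t) / (1 - Q) := by
    rw [show (1 - (t + 1)) = (1 - t) - 1 by ring, Real.rpow_sub h1Q, Real.rpow_one]
  have hqn : qNum Q t = (1 - Q ^ t) / (1 - Q) := by
    unfold qNum
    rw [← neg_div_neg_eq]
    ring_nf
  rw [hrp, hqn]
  ring

lemma one_le_qNum (hQ0 : 0 < Q) (hQ1 : Q < 1) (i : ℕ) : 1 ≤ qNum Q ((i : ℝ) + 1) := by
  unfold qNum
  have h1 : Q ^ ((i : ℝ) + 1) ≤ Q := by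
    calc Q ^ ((i : ℝ) + 1) ≤ Q ^ (1 : ℝ) :=
          Real.rpow_le_rpow_of_exponent_ge hQ0 hQ1.le (by linarith [Nat.cast_nonneg (α:=ℝ) i])
      _ = Q := Real.rpow_one Q
  rw [le_div_iff_of_neg (by linarith : Q - 1 < 0)]
  linarith

lemma one_le_qFact (hQ0 : 0 < Q) (hQ1 : Q < 1) (n : ℕ) : 1 ≤ qFact Q n := by
  unfold qFact
  refine le_trans (by simp) (Finset.prod_le_prod (fun i _ => zero_le_one) (fun i _ => ?_))
  exact one_le_qNum hQ0 hQ1 i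

lemma qFact_pos (hQ0 : 0 < Q) (hQ1 : Q < 1) (n : ℕ) : 0 < qFact Q n :=
  lt_of_lt_of_le one_pos (one_le_qFact hQ0 hQ1 n)

lemma qGamma_lb (hQ0 : 0 < Q) (hQ1 : Q < 1) {t : ℝ} (ht : 1 ≤ t) :
    Real.exp (∑' k : ℕ, Real.log (1 - Q ^ (k + 1))) ≤ qGamma Q t := by
  have ht0 : (0:ℝ) < t := by linarith
  rw [qGamma_eq hQ0 hQ1 ht0]
  have h1Q : (0:ℝ) < 1 - Q := by linarith
  have hb : (1:ℝ) ≤ (1 - Q) ^ (1 - t) :=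
    Real.one_le_rpow_of_pos_of_le_one_of_nonpos h1Q (by linarith) (by linarith)
  have hsum : (∑' k : ℕ, Real.log (1 - Q ^ (k + 1)))
      ≤ ∑' k : ℕ, (Real.log (1 - Q ^ (k + 1)) - Real.log (1 - Q ^ ((k : ℝ) + t))) := by
    apply Summable.tsum_le_tsum _ (summable_log_num hQ0 hQ1)
      ((summable_log_num hQ0 hQ1).sub (summable_log_den hQ0 hQ1 ht0))
    intro k
    have : Real.log (1 - Q ^ ((k : ℝ) + t)) ≤ 0 :=
      Real.log_nonpos (den_pos hQ0 hQ1 ht0 k).le (by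
        have := Real.rpow_pos_of_pos hQ0 ((k : ℝ) + t); linarith)
    linarith
  calc Real.exp (∑' k : ℕ, Real.log (1 - Q ^ (k + 1)))
      ≤ Real.exp (∑' k : ℕ, (Real.log (1 - Q ^ (k + 1)) - Real.log (1 - Q ^ ((k : ℝ) + t)))) := by
        exact Real.exp_le_exp.2 hsum
    _ ≤ (1 - Q) ^ (1 - t) *
        Real.exp (∑' k : ℕ, (Real.log (1 - Q ^ (k + 1)) - Real.log (1 - Q ^ ((k : ℝ) + t)))) := by
        nlinarith [Real.exp_pos (∑' k : ℕ, (Real.log (1 - Q ^ (k + 1)) - Real.log (1 - Q ^ ((k : ℝ) + t))))]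

end QAux

namespace QAux

open Real Filter Topology

/-- The coefficient of the second q-Bessel function series. -/
def Cterm (q ν : ℝ) (i : ℕ) : ℝ :=
  q ^ (2 * (i : ℝ) * ((i : ℝ) + ν)) * (-1 : ℝ) ^ i /
    (qFact (q ^ 2) i * qGamma (q ^ 2) ((i : ℝ) + ν + 1))

lemma summable_term (q ν : ℝ) (hq0 : 0 < q) (hq1 : q < 1) (hν : 0 < ν) (y : ℝ) :
    Summable (fun i : ℕ => Cterm q ν i * y ^ (2 * i)) := by
  have hq2_0 : (0:ℝ) < q ^ 2 := by positivity
  have hq2_1 : q ^ 2 < 1 := by nlinarith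
  set c := Real.exp (∑' k : ℕ, Real.log (1 - (q ^ 2) ^ (k + 1))) with hc
  have hcpos : 0 < c := Real.exp_pos _
  apply Summable.of_norm_bounded_eventually_nat (g := fun i => c⁻¹ * (1/2 : ℝ) ^ i)
    ((summable_geometric_of_lt_one (by norm_num) (by norm_num)).mul_left _)
  have hten : Tendsto (fun i : ℕ => (q ^ 2) ^ i * y ^ 2) atTop (𝓝 (0 * y ^ 2)) :=
    (tendsto_pow_atTop_nhds_zero_of_lt_one hq2_0.le hq2_1).mul_const _
  rw [zero_mul] at hten
  filter_upwards [hten.eventually (eventually_le_nhds (by norm_num : (0:ℝ) < 1/2))] with i hi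
  have hi0 : (0:ℝ) ≤ (i:ℝ) := Nat.cast_nonneg i
  have hF1 : 1 ≤ qFact (q ^ 2) i := one_le_qFact hq2_0 hq2_1 i
  have hF : 0 < qFact (q ^ 2) i := qFact_pos hq2_0 hq2_1 i
  have hΓlb : c ≤ qGamma (q ^ 2) ((i:ℝ) + ν + 1) :=
    qGamma_lb hq2_0 hq2_1 (by linarith)
  have hΓpos : 0 < qGamma (q ^ 2) ((i:ℝ) + ν + 1) := lt_of_lt_of_le hcpos hΓlb
  have hFΓ : c ≤ qFact (q ^ 2) i * qGamma (q ^ 2) ((i:ℝ) + ν + 1) := by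
    nlinarith
  have ha : 0 < q ^ (2 * (i:ℝ) * ((i:ℝ) + ν)) := Real.rpow_pos_of_pos hq0 _
  have hynn : (0:ℝ) ≤ (y ^ 2) ^ i := by positivity
  have habs : ‖Cterm q ν i * y ^ (2 * i)‖
      = q ^ (2 * (i:ℝ) * ((i:ℝ) + ν)) * (y ^ 2) ^ i /
        (qFact (q ^ 2) i * qGamma (q ^ 2) ((i:ℝ) + ν + 1)) := by
    unfold Cterm
    rw [pow_mul, Real.norm_eq_abs, abs_mul, abs_div, abs_mul, abs_pow, abs_neg, abs_one,
      one_pow, mul_one, abs_of_pos ha, abs_of_nonneg hynn,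
      abs_of_pos (mul_pos hF hΓpos), div_mul_eq_mul_div]
  rw [habs]
  have key : q ^ (2 * (i:ℝ) * ((i:ℝ) + ν)) * (y ^ 2) ^ i ≤ (1/2 : ℝ) ^ i := by
    have h1 : q ^ (2 * (i:ℝ) * ((i:ℝ) + ν)) ≤ q ^ (2 * (i:ℝ) * (i:ℝ)) :=
      Real.rpow_le_rpow_of_exponent_ge hq0 hq1.le (by nlinarith)
    have h2 : q ^ (2 * (i:ℝ) * (i:ℝ)) = ((q ^ 2) ^ i : ℝ) ^ i := by
      rw [show (2 * (i:ℝ) * (i:ℝ)) = ((2 * i * i : ℕ) : ℝ) by push_cast; ring,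
        Real.rpow_natCast, pow_mul, pow_mul]
    calc q ^ (2 * (i:ℝ) * ((i:ℝ) + ν)) * (y ^ 2) ^ i
        ≤ ((q ^ 2) ^ i : ℝ) ^ i * (y ^ 2) ^ i := by
          rw [← h2]; exact mul_le_mul_of_nonneg_right h1 hynn
      _ = ((q ^ 2) ^ i * y ^ 2) ^ i := by rw [mul_pow]
      _ ≤ (1/2 : ℝ) ^ i := by
          apply pow_le_pow_left₀ (by positivity) hi
  calc q ^ (2 * (i:ℝ) * ((i:ℝ) + ν)) * (y ^ 2) ^ i /
        (qFact (q ^ 2) i * qGamma (q ^ 2) ((i:ℝ) + ν + 1))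
      ≤ (1/2 : ℝ) ^ i / c := by
        apply div_le_div₀ (by positivity) key hcpos hFΓ
    _ = c⁻¹ * (1/2 : ℝ) ^ i := by rw [div_eq_mul_inv, mul_comm]

lemma term_eq (q ν x : ℝ) (hq0 : 0 < q) (hq1 : q < 1) (hν : 0 < ν) (hx : 0 < x) (i : ℕ) :
    (q ^ (2 * ν) * (Cterm q ν i * (q * x) ^ (2 * i)) - Cterm q ν i * x ^ (2 * i)) /
      ((q - 1) * ((1 + q) * x))
    = Cterm q (ν - 1) i * (q * x) ^ (2 * i) / x := by
  have hq2_0 : (0:ℝ) < q ^ 2 := by positivity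
  have hq2_1 : q ^ 2 < 1 := by nlinarith
  have hi0 : (0:ℝ) ≤ (i:ℝ) := Nat.cast_nonneg i
  have ht : 0 < (i:ℝ) + ν := by linarith
  have hG : 0 < qGamma (q ^ 2) ((i:ℝ) + ν) := qGamma_pos hq2_0 hq2_1 ht
  have hF : 0 < qFact (q ^ 2) i := qFact_pos hq2_0 hq2_1 i
  have hrec := qGamma_add_one hq2_0 hq2_1 ht
  have hpow : ((q ^ 2 : ℝ)) ^ ((i:ℝ) + ν) = q ^ (2 * ν) * q ^ (2 * i) := by
    rw [← Real.rpow_natCast q 2, ← Real.rpow_mul hq0.le,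
      show ((2:ℕ):ℝ) * ((i:ℝ) + ν) = 2 * ν + ((2 * i : ℕ) : ℝ) by push_cast; ring,
      Real.rpow_add hq0, Real.rpow_natCast]
  have hqnum : qNum (q ^ 2) ((i:ℝ) + ν) = (q ^ (2 * ν) * q ^ (2 * i) - 1) / (q ^ 2 - 1) := by
    unfold qNum; rw [hpow]
  have hm : q ^ (2 * ν) * q ^ (2 * i) < 1 := by
    have h1 : q ^ (2 * ν) < 1 := Real.rpow_lt_one hq0.le hq1 (by linarith)
    have h2 : (q:ℝ) ^ (2 * i) ≤ 1 := pow_le_one₀ hq0.le hq1.le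
    nlinarith [Real.rpow_pos_of_pos hq0 (2 * ν), pow_pos hq0 (2 * i)]
  have hm1 : q ^ (2 * ν) * q ^ (2 * i) - 1 ≠ 0 := by
    intro h; nlinarith
  have f2 : q ^ (2 * (i:ℝ) * ((i:ℝ) + (ν - 1))) * q ^ (2 * i)
      = q ^ (2 * (i:ℝ) * ((i:ℝ) + ν)) := by
    rw [← Real.rpow_natCast q (2 * i), ← Real.rpow_add hq0]
    congr 1; push_cast; ring
  have harg : (i:ℝ) + (ν - 1) + 1 = (i:ℝ) + ν := by ring
  unfold Cterm
  rw [harg, hrec, hqnum, mul_pow, ← f2]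
  have hq21 : q ^ 2 - (1:ℝ) ≠ 0 := by nlinarith
  have hq1' : q - 1 ≠ 0 := by intro h; nlinarith
  have h1q' : (1:ℝ) + q ≠ 0 := by nlinarith
  field_simp
  ring

end QAux

/-- `∂^q_u (u^ν J^{(2)}_ν(u|q²)) = q^ν u^ν J^{(2)}_{ν-1}(qu|q²)`
for `ν > 0` and `u > 0`. -/
theorem qBessel2_qDeriv_mul (q : ℝ) (hq0 : 0 < q) (hq1 : q < 1)
    (ν : ℝ) (hν : ν > 0) (u : ℝ) (hu0 : 0 < u) :
    qDeriv q (fun s => s ^ ν * qBessel2 q ν s) u =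
      q ^ ν * u ^ ν * qBessel2 q (ν - 1) (q * u) := by
  have h1q : (0:ℝ) < 1 + q := by linarith
  have hBess : ∀ μ s : ℝ, qBessel2 q μ s
      = q ^ (μ ^ 2) * (s / (1 + q)) ^ μ *
        ∑' i : ℕ, QAux.Cterm q μ i * (s / (1 + q)) ^ (2 * i) := fun μ s => rfl
  rw [show qDeriv q (fun s => s ^ ν * qBessel2 q ν s) u
      = ((q * u) ^ ν * qBessel2 q ν (q * u) - u ^ ν * qBessel2 q ν u) / ((q - 1) * u)
      from rfl]
  rw [hBess ν (q * u), hBess ν u, hBess (ν - 1) (q * u)]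
  set x : ℝ := u / (1 + q) with hxdef
  have hx : 0 < x := div_pos hu0 h1q
  have hqu : q * u / (1 + q) = q * x := by rw [hxdef, mul_div_assoc]
  simp only [hqu]
  rw [Real.mul_rpow hq0.le hu0.le, Real.mul_rpow hq0.le hx.le, Real.mul_rpow hq0.le hx.le]
  have hxν1 : x ^ (ν - 1) = x ^ ν / x := by rw [Real.rpow_sub hx, Real.rpow_one]
  rw [hxν1]
  have hu_eq : u = (1 + q) * x := by rw [hxdef]; field_simp
  have hs1 : Summable (fun i : ℕ => QAux.Cterm q ν i * x ^ (2 * i)) :=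
    QAux.summable_term q ν hq0 hq1 hν x
  have hs2 : Summable (fun i : ℕ => QAux.Cterm q ν i * (q * x) ^ (2 * i)) :=
    QAux.summable_term q ν hq0 hq1 hν (q * x)
  have e1 : q ^ ν * q ^ ν = q ^ (2 * ν) := by
    rw [← Real.rpow_add hq0]; ring_nf
  have e2 : q ^ ν * q ^ ((ν - 1) ^ 2) * q ^ (ν - 1) = q ^ (ν ^ 2) := by
    rw [← Real.rpow_add hq0, ← Real.rpow_add hq0]; ring_nf
  have hTs : (∑' i : ℕ, (q ^ (2 * ν) * (QAux.Cterm q ν i * (q * x) ^ (2 * i))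
        - QAux.Cterm q ν i * x ^ (2 * i)))
      = q ^ (2 * ν) * (∑' i : ℕ, QAux.Cterm q ν i * (q * x) ^ (2 * i))
        - ∑' i : ℕ, QAux.Cterm q ν i * x ^ (2 * i) := by
    rw [Summable.tsum_sub (hs2.mul_left _) hs1, tsum_mul_left]
  have hL : (q ^ ν * u ^ ν * (q ^ (ν ^ 2) * (q ^ ν * x ^ ν) *
        ∑' i : ℕ, QAux.Cterm q ν i * (q * x) ^ (2 * i))
      - u ^ ν * (q ^ (ν ^ 2) * x ^ ν * ∑' i : ℕ, QAux.Cterm q ν i * x ^ (2 * i)))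
        / ((q - 1) * u)
      = q ^ (ν ^ 2) * u ^ ν * x ^ ν *
        ∑' i : ℕ, (q ^ (2 * ν) * (QAux.Cterm q ν i * (q * x) ^ (2 * i))
          - QAux.Cterm q ν i * x ^ (2 * i)) / ((q - 1) * u) := by
    rw [tsum_div_const, hTs, ← e1]
    ring
  have hR : q ^ ν * u ^ ν * (q ^ ((ν - 1) ^ 2) * (q ^ (ν - 1) * (x ^ ν / x)) *
        ∑' i : ℕ, QAux.Cterm q (ν - 1) i * (q * x) ^ (2 * i))
      = q ^ (ν ^ 2) * u ^ ν * x ^ ν *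
        ∑' i : ℕ, QAux.Cterm q (ν - 1) i * (q * x) ^ (2 * i) / x := by
    rw [tsum_div_const, ← e2]
    ring
  rw [hL, hR]
  have perI : ∀ i : ℕ, (q ^ (2 * ν) * (QAux.Cterm q ν i * (q * x) ^ (2 * i))
      - QAux.Cterm q ν i * x ^ (2 * i)) / ((q - 1) * u)
      = QAux.Cterm q (ν - 1) i * (q * x) ^ (2 * i) / x := by
    intro i
    rw [hu_eq]
    exact QAux.term_eq q ν x hq0 hq1 hν hx i
  rw [tsum_congr perI]
end
end
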